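/- arXiv:1002.0780 — 7 statements merged into one kernel-verified Lean document; each statement's English description precedes it below -/
import Mathlib

section
/- Let K > 2 be a real number, let H ∈ [1/2 + 1/K, 1), and let t > 0. Then ∫_0^t (z_H(t,s))^K ds = ∞, i.e. the K-th power of the Molchan–Golosov kernel s ↦ z_H(t,s) is not integrable on (0,t). -/
open MeasureTheory Set

/-- Normalizing constant of the Mandelbrot–Van Ness kernel. -/
noncomputable def C_H (H : ℝ) : ℝ :=
  Real.sqrt (2 * H * Real.sin (Real.pi * H) * Real.Gamma (2 * H)) / Real.Gamma (H + 1/2)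

/-- Normalizing constant of the Molchan–Golosov kernel. -/
noncomputable def c_H (H : ℝ) : ℝ :=
  (Real.Gamma (H + 1/2))⁻¹ *
    Real.sqrt (2 * H * Real.Gamma (H + 1/2) * Real.Gamma (3/2 - H) / Real.Gamma (2 - 2*H))

/-- Mandelbrot–Van Ness kernel `f_H(t,s) = C_H((t-s)_+^{H-1/2} - (-s)_+^{H-1/2})`. -/
noncomputable def f_H (H t s : ℝ) : ℝ :=
  C_H H * (max (t - s) 0 ^ (H - 1/2) - max (-s) 0 ^ (H - 1/2))

/-- Molchan–Golosov kernel for `H ∈ (1/2,1)`: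
`z_H(t,s) = (H-1/2) c_H s^{1/2-H} ∫_s^t u^{H-1/2}(u-s)^{H-3/2} du` for `0 < s < t`,
and `0` otherwise. -/
noncomputable def z_H (H t s : ℝ) : ℝ :=
  if 0 < s ∧ s < t then
    (H - 1/2) * c_H H * s ^ ((1:ℝ)/2 - H) *
      ∫ u in Set.Ioo s t, u ^ (H - 1/2) * (u - s) ^ (H - 3/2)
  else 0

/-- For real `K > 2`, `H ∈ [1/2 + 1/K, 1)` and `t > 0`, the `K`-th power of the
Molchan–Golosov kernel is not integrable on `(0,t)`: `∫_0^t (z_H(t,s))^K ds = ∞`. -/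
theorem zH_pow_lintegral_eq_top (K H t : ℝ) (hK : 2 < K)
    (hH : H ∈ Set.Ico (1/2 + 1/K) (1:ℝ)) (ht : 0 < t) :
    ∫⁻ s in Set.Ioo (0:ℝ) t, ENNReal.ofReal (z_H H t s ^ K) = ⊤ := by
  obtain ⟨hH1, hH2⟩ := hH
  have hK0 : (0:ℝ) < K := by linarith
  have hKinv : (0:ℝ) < 1/K := by positivity
  have hH12 : (1:ℝ)/2 < H := by linarith
  -- positivity of the normalizing constant
  have hcH : 0 < c_H H := by
    have h1 : 0 < Real.Gamma (H + 1/2) := Real.Gamma_pos_of_pos (by linarith)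
    have h2 : 0 < Real.Gamma (3/2 - H) := Real.Gamma_pos_of_pos (by linarith)
    have h3 : 0 < Real.Gamma (2 - 2*H) := Real.Gamma_pos_of_pos (by linarith)
    have h4 : 0 < 2 * H * Real.Gamma (H + 1/2) * Real.Gamma (3/2 - H) / Real.Gamma (2 - 2*H) := by
      positivity
    unfold c_H
    positivity
  set C0 : ℝ := (H - 1/2) * c_H H with hC0def
  have hC0 : 0 < C0 := mul_pos (by linarith) hcH
  set A' : ℝ := (t/2) ^ (H - 1/2) * t ^ (H - 3/2) with hA'def
  have hA' : 0 < A' := by positivity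
  set A : ℝ := A' * (t/2) with hAdef
  have hA : 0 < A := by positivity
  set B : ℝ := C0 * A with hBdef
  have hB : 0 < B := mul_pos hC0 hA
  set q : ℝ := (1/2 - H) * K with hqdef
  have hq : q ≤ -1 := by
    have h5 : 1/2 - H ≤ -(1/K) := by linarith
    have h6 : (1/2 - H) * K ≤ (-(1/K)) * K := mul_le_mul_of_nonneg_right h5 hK0.le
    have h7 : (-(1/K)) * K = -1 := by field_simp
    rw [hqdef]; linarith [h6, h7.le, h7.ge]
  -- key pointwise lower bound on (0, t/2)
  have key : ∀ s ∈ Ioo (0:ℝ) (t/2), B ^ K * s ^ q ≤ z_H H t s ^ K := by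
    intro s hs
    obtain ⟨hs0, hst2⟩ := hs
    have hst : s < t := by linarith
    -- integrability of the inner integrand
    have hcont : ContinuousOn (fun u : ℝ => u ^ (H - 1/2) * (u - s) ^ (H - 3/2)) (Ioo s t) := by
      apply ContinuousOn.mul
      · exact (Real.continuous_rpow_const (by linarith)).continuousOn
      · exact ContinuousOn.rpow_const (continuous_id.sub continuous_const).continuousOn
          (fun u hu => Or.inl (sub_ne_zero.mpr (ne_of_gt hu.1)))
    have hbase : IntegrableOn (fun u : ℝ => (u - s) ^ (H - 3/2)) (Ioo s t) := by
      have h1 : IntervalIntegrable (fun x : ℝ => x ^ (H - 3/2)) volume 0 (t - s) :=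
        intervalIntegral.intervalIntegrable_rpow' (by linarith)
      have h2 := h1.comp_sub_right s
      have h3 : t - s + s = t := by ring
      rw [zero_add, h3] at h2
      exact (intervalIntegrable_iff_integrableOn_Ioo_of_le (by linarith)).mp h2
    have hint : IntegrableOn (fun u : ℝ => u ^ (H - 1/2) * (u - s) ^ (H - 3/2)) (Ioo s t) := by
      apply Integrable.mono' (hbase.const_mul (t ^ (H - 1/2)))
        (hcont.aestronglyMeasurable measurableSet_Ioo)
      filter_upwards [ae_restrict_mem measurableSet_Ioo] with u hu
      have hu0 : 0 < u := lt_trans hs0 hu.1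
      have hus : 0 < u - s := sub_pos.mpr hu.1
      rw [Real.norm_eq_abs,
        abs_of_nonneg (mul_nonneg (Real.rpow_nonneg hu0.le _) (Real.rpow_nonneg hus.le _))]
      exact mul_le_mul_of_nonneg_right (Real.rpow_le_rpow hu0.le hu.2.le (by linarith))
        (Real.rpow_nonneg hus.le _)
    -- lower bound on the inner integral
    have hI : A ≤ ∫ u in Ioo s t, u ^ (H - 1/2) * (u - s) ^ (H - 3/2) := by
      have hsub : Ioo (t/2) t ⊆ Ioo s t := Ioo_subset_Ioo hst2.le le_rfl
      have step1 : ∫ _ in Ioo (t/2) t, A' = A := by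
        rw [setIntegral_const, measureReal_def, Real.volume_Ioo, smul_eq_mul,
          ENNReal.toReal_ofReal (by linarith)]
        rw [hAdef]; ring
      have step2 : ∫ _ in Ioo (t/2) t, A'
          ≤ ∫ u in Ioo (t/2) t, u ^ (H - 1/2) * (u - s) ^ (H - 3/2) := by
        apply setIntegral_mono_on
        · exact integrableOn_const measure_Ioo_lt_top.ne
        · exact hint.mono_set hsub
        · exact measurableSet_Ioo
        · intro u hu
          have hu0 : 0 < u := lt_trans (by linarith) hu.1
          have hus : 0 < u - s := by have := hu.1; linarith
          have h1 : (t/2) ^ (H - 1/2) ≤ u ^ (H - 1/2) :=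
            Real.rpow_le_rpow (by positivity) hu.1.le (by linarith)
          have h2 : t ^ (H - 3/2) ≤ (u - s) ^ (H - 3/2) :=
            Real.rpow_le_rpow_of_nonpos hus (by have := hu.2; linarith) (by linarith)
          rw [hA'def]
          exact mul_le_mul h1 h2 (Real.rpow_nonneg ht.le _) (Real.rpow_nonneg hu0.le _)
      have step3 : ∫ u in Ioo (t/2) t, u ^ (H - 1/2) * (u - s) ^ (H - 3/2)
          ≤ ∫ u in Ioo s t, u ^ (H - 1/2) * (u - s) ^ (H - 3/2) := by
        apply setIntegral_mono_set hint
        · filter_upwards [ae_restrict_mem measurableSet_Ioo] with u hu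
          have hu0 : 0 < u := lt_trans hs0 hu.1
          have hus : 0 < u - s := sub_pos.mpr hu.1
          exact mul_nonneg (Real.rpow_nonneg hu0.le _) (Real.rpow_nonneg hus.le _)
        · exact HasSubset.Subset.eventuallyLE hsub
      linarith [step1, step2, step3]
    -- lower bound on the kernel
    have hz : B * s ^ ((1:ℝ)/2 - H) ≤ z_H H t s := by
      rw [z_H, if_pos ⟨hs0, hst⟩, ← hC0def]
      have h1 : B * s ^ ((1:ℝ)/2 - H) = C0 * s ^ ((1:ℝ)/2 - H) * A := by
        rw [hBdef]; ring
      rw [h1]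
      exact mul_le_mul_of_nonneg_left hI (mul_nonneg hC0.le (Real.rpow_nonneg hs0.le _))
    -- raise to the K-th power
    have h2 : (B * s ^ ((1:ℝ)/2 - H)) ^ K ≤ z_H H t s ^ K :=
      Real.rpow_le_rpow (mul_nonneg hB.le (Real.rpow_nonneg hs0.le _)) hz hK0.le
    have h3 : B ^ K * s ^ q = (B * s ^ ((1:ℝ)/2 - H)) ^ K := by
      rw [Real.mul_rpow hB.le (Real.rpow_nonneg hs0.le _), hqdef,
        show (1/2 - H) = ((1:ℝ)/2 - H) by norm_num, Real.rpow_mul hs0.le]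
    rw [h3]; exact h2
  -- non-integrability of the lower bound
  have hnotint : ¬ IntegrableOn (fun s : ℝ => B ^ K * s ^ q) (Ioo 0 (t/2)) := by
    intro h
    have hBK : B ^ K ≠ 0 := (Real.rpow_pos_of_pos hB K).ne'
    have h2 : IntegrableOn (fun s : ℝ => s ^ q) (Ioo 0 (t/2)) :=
      (integrable_smul_iff hBK (fun s : ℝ => s ^ q)).mp (by exact h)
    rw [intervalIntegral.integrableOn_Ioo_rpow_iff (by linarith)] at h2
    linarith
  have htop : ∫⁻ s in Ioo (0:ℝ) (t/2), ENNReal.ofReal (B ^ K * s ^ q) = ⊤ := by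
    by_contra h
    apply hnotint
    have hmeas : AEStronglyMeasurable (fun s : ℝ => B ^ K * s ^ q)
        (volume.restrict (Ioo (0:ℝ) (t/2))) := by
      apply ContinuousOn.aestronglyMeasurable _ measurableSet_Ioo
      exact continuousOn_const.mul
        (ContinuousOn.rpow_const continuousOn_id (fun x hx => Or.inl (ne_of_gt hx.1)))
    have hnn : 0 ≤ᵐ[volume.restrict (Ioo (0:ℝ) (t/2))] fun s : ℝ => B ^ K * s ^ q := by
      filter_upwards [ae_restrict_mem measurableSet_Ioo] with s hs
      exact mul_nonneg (Real.rpow_nonneg hB.le _) (Real.rpow_nonneg hs.1.le _)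
    exact (lintegral_ofReal_ne_top_iff_integrable hmeas hnn).mp h
  refine top_le_iff.mp ?_
  calc (⊤ : ENNReal) = ∫⁻ s in Ioo (0:ℝ) (t/2), ENNReal.ofReal (B ^ K * s ^ q) := htop.symm
    _ ≤ ∫⁻ s in Ioo (0:ℝ) (t/2), ENNReal.ofReal (z_H H t s ^ K) := by
        apply lintegral_mono_ae
        filter_upwards [ae_restrict_mem measurableSet_Ioo] with s hs
        exact ENNReal.ofReal_le_ofReal (key s hs)
    _ ≤ ∫⁻ s in Ioo (0:ℝ) t, ENNReal.ofReal (z_H H t s ^ K) :=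
        lintegral_mono' (Measure.restrict_mono (Ioo_subset_Ioo le_rfl (by linarith)) le_rfl) le_rfl
end

section
/- Let H ∈ (1/2,1), let K ≥ 2 be a real number, and let t > 0. Then ∫_{−∞}^t (f_H(t,s))^K ds < ∞, i.e. the K-th power of the Mandelbrot–Van Ness kernel s ↦ f_H(t,s) is integrable on (−∞, t). -/
open MeasureTheory Set

/-- For `H ∈ (1/2,1)`, real `K ≥ 2` and `t > 0`, the `K`-th power of the
Mandelbrot–Van Ness kernel is integrable on `(−∞, t)`: `∫_{−∞}^t (f_H(t,s))^K ds < ∞`. -/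
theorem fH_pow_lintegral_lt_top (H K t : ℝ) (hH : H ∈ Set.Ioo (1/2 : ℝ) 1)
    (hK : 2 ≤ K) (ht : 0 < t) :
    ∫⁻ s in Set.Iio t, ENNReal.ofReal (f_H H t s ^ K) < ⊤ := by
  obtain ⟨hH1, hH2⟩ := hH
  have hα0 : (0:ℝ) < H - 1/2 := by linarith
  have hα1 : H - 1/2 < 1/2 := by linarith
  have hK0 : (0:ℝ) ≤ K := by linarith
  have hC : 0 ≤ C_H H := by
    unfold C_H
    exact div_nonneg (Real.sqrt_nonneg _) (Real.Gamma_pos_of_pos (by linarith)).le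
  have hfnn : ∀ s : ℝ, 0 ≤ f_H H t s := by
    intro s
    unfold f_H
    apply mul_nonneg hC
    apply sub_nonneg.2
    exact Real.rpow_le_rpow (le_max_right _ _)
      (max_le_max (by linarith) le_rfl) hα0.le
  have hsplit : Iio t = Iio (-1:ℝ) ∪ Ico (-1) t := (Iio_union_Ico_eq_Iio (by linarith)).symm
  rw [hsplit, lintegral_union measurableSet_Ico
    ((Iio_disjoint_Ici le_rfl).mono_right Ico_subset_Ici_self)]
  apply ENNReal.add_lt_top.2
  constructor
  · -- tail part on `Iio (-1)`
    set β := (H - 1/2 - 1) * K with hβ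
    have hβlt : β < -1 := by nlinarith
    have hbound : ∀ s ∈ Iio (-1:ℝ),
        ENNReal.ofReal (f_H H t s ^ K) ≤
          ENNReal.ofReal ((C_H H * t) ^ K) * ENNReal.ofReal ((-s) ^ β) := by
      intro s hs
      have hs1 : s < -1 := hs
      have hns0 : (0:ℝ) < -s := by linarith
      rw [← ENNReal.ofReal_mul (Real.rpow_nonneg (by positivity) _)]
      apply ENNReal.ofReal_le_ofReal
      have key : f_H H t s ≤ C_H H * t * (-s) ^ (H - 1/2 - 1) := by
        unfold f_H
        rw [max_eq_left (by linarith : (0:ℝ) ≤ t - s), max_eq_left hns0.le]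
        have hmain : (t - s) ^ (H - 1/2) ≤
            (-s) ^ (H - 1/2) + (H - 1/2) * (t * (-s) ^ (H - 1/2 - 1)) := by
          have hsne : s ≠ 0 := by linarith
          have heq : t - s = (-s) * (1 + t / (-s)) := by field_simp; ring
          rw [heq, Real.mul_rpow hns0.le (by positivity)]
          have hdiv : (0:ℝ) ≤ t / -s := div_nonneg ht.le hns0.le
          have hb := rpow_one_add_le_one_add_mul_self
            (s := t / (-s)) (by linarith) hα0.le (by linarith)
          calc (-s) ^ (H - 1/2) * (1 + t / (-s)) ^ (H - 1/2)
              ≤ (-s) ^ (H - 1/2) * (1 + (H - 1/2) * (t / (-s))) :=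
                mul_le_mul_of_nonneg_left hb (Real.rpow_nonneg hns0.le _)
            _ = (-s) ^ (H - 1/2) + (H - 1/2) * (t * (-s) ^ (H - 1/2 - 1)) := by
                rw [Real.rpow_sub_one (by linarith : (-s) ≠ 0)]
                field_simp
        have h2 : (H - 1/2) * (t * (-s) ^ (H - 1/2 - 1)) ≤ t * (-s) ^ (H - 1/2 - 1) := by
          exact mul_le_of_le_one_left (by positivity) (by linarith)
        calc C_H H * ((t - s) ^ (H - 1/2) - (-s) ^ (H - 1/2))
            ≤ C_H H * ((H - 1/2) * (t * (-s) ^ (H - 1/2 - 1))) := by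
              apply mul_le_mul_of_nonneg_left (by linarith) hC
          _ ≤ C_H H * (t * (-s) ^ (H - 1/2 - 1)) := by
              apply mul_le_mul_of_nonneg_left h2 hC
          _ = C_H H * t * (-s) ^ (H - 1/2 - 1) := by ring
      calc f_H H t s ^ K ≤ (C_H H * t * (-s) ^ (H - 1/2 - 1)) ^ K :=
            Real.rpow_le_rpow (hfnn s) key hK0
        _ = (C_H H * t) ^ K * (-s) ^ β := by
            rw [hβ, Real.mul_rpow (by positivity) (Real.rpow_nonneg hns0.le _),
              ← Real.rpow_mul hns0.le]
    have hInt : IntegrableOn (fun s : ℝ => (-s) ^ β) (Iio (-1)) := by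
      have h1 : IntegrableOn (fun x : ℝ => x ^ β) (Ioi 1) :=
        integrableOn_Ioi_rpow_of_lt hβlt one_pos
      rw [← (Measure.measurePreserving_neg (volume : Measure ℝ)).integrableOn_comp_preimage
        (Homeomorph.neg ℝ).measurableEmbedding] at h1
      simpa [Function.comp_def, neg_preimage, neg_Ioi] using h1
    calc ∫⁻ s in Iio (-1:ℝ), ENNReal.ofReal (f_H H t s ^ K)
        ≤ ∫⁻ s in Iio (-1:ℝ),
            ENNReal.ofReal ((C_H H * t) ^ K) * ENNReal.ofReal ((-s) ^ β) :=
          setLIntegral_mono' measurableSet_Iio hbound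
      _ = ENNReal.ofReal ((C_H H * t) ^ K) *
            ∫⁻ s in Iio (-1:ℝ), ENNReal.ofReal ((-s) ^ β) := by
          exact lintegral_const_mul' _ _ ENNReal.ofReal_ne_top
      _ < ⊤ := ENNReal.mul_lt_top ENNReal.ofReal_lt_top hInt.lintegral_lt_top
  · -- bounded part on `Ico (-1) t`
    have hbound : ∀ s ∈ Ico (-1:ℝ) t,
        ENNReal.ofReal (f_H H t s ^ K) ≤
          ENNReal.ofReal ((C_H H * (t + 1) ^ (H - 1/2)) ^ K) := by
      intro s hs
      apply ENNReal.ofReal_le_ofReal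
      apply Real.rpow_le_rpow (hfnn s) ?_ hK0
      unfold f_H
      calc C_H H * (max (t - s) 0 ^ (H - 1/2) - max (-s) 0 ^ (H - 1/2))
          ≤ C_H H * (max (t - s) 0 ^ (H - 1/2)) :=
            mul_le_mul_of_nonneg_left
              (sub_le_self _ (Real.rpow_nonneg (le_max_right _ _) _)) hC
        _ ≤ C_H H * ((t + 1) ^ (H - 1/2)) :=
            mul_le_mul_of_nonneg_left
              (Real.rpow_le_rpow (le_max_right _ _)
                (max_le (by linarith [hs.1]) (by positivity)) hα0.le) hC
    calc ∫⁻ s in Ico (-1:ℝ) t, ENNReal.ofReal (f_H H t s ^ K)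
        ≤ ∫⁻ _ in Ico (-1:ℝ) t,
            ENNReal.ofReal ((C_H H * (t + 1) ^ (H - 1/2)) ^ K) :=
          setLIntegral_mono' measurableSet_Ico hbound
      _ = ENNReal.ofReal ((C_H H * (t + 1) ^ (H - 1/2)) ^ K) * volume (Ico (-1:ℝ) t) :=
          setLIntegral_const _ _
      _ < ⊤ := ENNReal.mul_lt_top ENNReal.ofReal_lt_top
          (by rw [Real.volume_Ico]; exact ENNReal.ofReal_lt_top)
end

section
/- Let K > 2 be a real number, let H ∈ [1/2 + 1/K, 1), and let t > 0. Then ∫_{−∞}^t (f_H(t,s))^K ds < ∫_0^t (z_H(t,s))^K ds; in particular the left-hand side is finite while the right-hand side is infinite. -/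
open MeasureTheory Set

lemma lint_rpow_top {q b : ℝ} (hq : q ≤ -1) (hb : 0 < b) :
    (∫⁻ s in Set.Ioo (0:ℝ) b, ENNReal.ofReal (s ^ q)) = ⊤ := by
  by_contra h
  have hmeas : AEStronglyMeasurable (fun s : ℝ => s ^ q)
      (volume.restrict (Set.Ioo (0:ℝ) b)) :=
    (measurable_id'.pow_const q).aestronglyMeasurable
  have hpos : 0 ≤ᵐ[volume.restrict (Set.Ioo (0:ℝ) b)] fun s : ℝ => s ^ q := by
    rw [Filter.EventuallyLE, ae_restrict_iff' measurableSet_Ioo]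
    exact Filter.Eventually.of_forall fun s hs => Real.rpow_nonneg hs.1.le q
  have h2 : IntegrableOn (fun s : ℝ => s ^ q) (Set.Ioo (0:ℝ) b) :=
    (lintegral_ofReal_ne_top_iff_integrable hmeas hpos).1 h
  rw [intervalIntegral.integrableOn_Ioo_rpow_iff hb] at h2
  linarith

lemma inner_lb {H t s : ℝ} (hH1 : 1/2 < H) (hH2 : H < 1) (ht : 0 < t)
    (hs : 0 < s) (hst : s < t/2) :
    (t/2) ^ (H - 1/2) * t ^ (H - 3/2) * (t/2)
      ≤ ∫ u in Set.Ioo s t, u ^ (H - 1/2) * (u - s) ^ (H - 3/2) := by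
  have ht2 : 0 < t/2 := by linarith
  have hslt : s < t := by linarith
  have hJ : IntegrableOn (fun u : ℝ => (u - s) ^ (H - 3/2)) (Set.Ioo s t) := by
    have h1 := (intervalIntegral.intervalIntegrable_rpow' (a := 0) (b := t - s)
        (by linarith : (-1:ℝ) < H - 3/2)).comp_sub_right s
    rw [zero_add, sub_add_cancel] at h1
    rwa [intervalIntegrable_iff_integrableOn_Ioo_of_le hslt.le] at h1
  have hint : IntegrableOn (fun u : ℝ => u ^ (H - 1/2) * (u - s) ^ (H - 3/2))
      (Set.Ioo s t) := by
    refine Integrable.mono' (hJ.const_mul (t ^ (H - 1/2)))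
      (((measurable_id'.pow_const _).mul
        ((measurable_id'.sub_const s).pow_const _)).aestronglyMeasurable) ?_
    rw [ae_restrict_iff' measurableSet_Ioo]
    refine Filter.Eventually.of_forall fun u hu => ?_
    have hu0 : 0 < u := hs.trans hu.1
    have h1 : 0 ≤ (u - s) ^ (H - 3/2) := Real.rpow_nonneg (by linarith [hu.1]) _
    rw [Real.norm_eq_abs, abs_of_nonneg (mul_nonneg (Real.rpow_nonneg hu0.le _) h1)]
    exact mul_le_mul_of_nonneg_right
      (Real.rpow_le_rpow hu0.le hu.2.le (by linarith)) h1
  have hsub : Set.Ioo (t/2) t ⊆ Set.Ioo s t := Set.Ioo_subset_Ioo hst.le le_rfl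
  have h2 : (∫ u in Set.Ioo (t/2) t, u ^ (H - 1/2) * (u - s) ^ (H - 3/2))
      ≤ ∫ u in Set.Ioo s t, u ^ (H - 1/2) * (u - s) ^ (H - 3/2) := by
    refine setIntegral_mono_set hint ?_ (HasSubset.Subset.eventuallyLE hsub)
    rw [Filter.EventuallyLE, ae_restrict_iff' measurableSet_Ioo]
    refine Filter.Eventually.of_forall fun u hu => ?_
    exact mul_nonneg (Real.rpow_nonneg (by linarith [hu.1] : (0:ℝ) ≤ u) _)
      (Real.rpow_nonneg (by linarith [hu.1] : (0:ℝ) ≤ u - s) _)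
  refine le_trans ?_ h2
  have hmono : ∀ u ∈ Set.Ioo (t/2) t,
      (t/2) ^ (H - 1/2) * t ^ (H - 3/2) ≤ u ^ (H - 1/2) * (u - s) ^ (H - 3/2) := by
    intro u hu
    have hu0 : 0 < u := ht2.trans hu.1
    have hus : 0 < u - s := by linarith [hu.1]
    exact mul_le_mul (Real.rpow_le_rpow ht2.le hu.1.le (by linarith))
      (Real.rpow_le_rpow_of_nonpos hus (by linarith [hu.2] : u - s ≤ t) (by linarith))
      (Real.rpow_nonneg ht.le _) (Real.rpow_nonneg hu0.le _)
  calc (t/2) ^ (H - 1/2) * t ^ (H - 3/2) * (t/2)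
      = ∫ _u in Set.Ioo (t/2) t, ((t/2) ^ (H - 1/2) * t ^ (H - 3/2)) := by
        rw [setIntegral_const, measureReal_def, Real.volume_Ioo,
          ENNReal.toReal_ofReal (by linarith : (0:ℝ) ≤ t - t/2), smul_eq_mul]
        ring
    _ ≤ ∫ u in Set.Ioo (t/2) t, u ^ (H - 1/2) * (u - s) ^ (H - 3/2) :=
        setIntegral_mono_on
          (integrableOn_const (by rw [Real.volume_Ioo]; exact ENNReal.ofReal_ne_top))
          (hint.mono_set hsub) measurableSet_Ioo hmono

lemma zH_top {K H t : ℝ} (hK : 2 < K) (hH : H ∈ Set.Ico (1/2 + 1/K) (1:ℝ)) (ht : 0 < t) :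
    (∫⁻ s in Set.Ioo (0:ℝ) t, ENNReal.ofReal (z_H H t s ^ K)) = ⊤ := by
  obtain ⟨hH1, hH2⟩ := hH
  have hK0 : (0:ℝ) < K := by linarith
  have hKinv : 0 < 1/K := by positivity
  have ha0 : 0 < H - 1/2 := by linarith
  have hq : ((1:ℝ)/2 - H) * K ≤ -1 := by
    have h1 : 1/K * K ≤ (H - 1/2) * K :=
      mul_le_mul_of_nonneg_right (by linarith) hK0.le
    rw [one_div_mul_cancel hK0.ne'] at h1
    nlinarith
  have hG1 : 0 < Real.Gamma (H + 1/2) := Real.Gamma_pos_of_pos (by linarith)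
  have hG2 : 0 < Real.Gamma (3/2 - H) := Real.Gamma_pos_of_pos (by linarith)
  have hG3 : 0 < Real.Gamma (2 - 2*H) := Real.Gamma_pos_of_pos (by linarith)
  have hcH : 0 < c_H H := by
    unfold c_H
    have hin : 0 < 2 * H * Real.Gamma (H + 1/2) * Real.Gamma (3/2 - H) / Real.Gamma (2 - 2*H) := by
      have hH0 : 0 < H := by linarith
      positivity
    exact mul_pos (inv_pos.2 hG1) (Real.sqrt_pos.2 hin)
  set A : ℝ := (H - 1/2) * c_H H * ((t/2) ^ (H - 1/2) * t ^ (H - 3/2) * (t/2)) with hA_def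
  have hA : 0 < A := by
    refine mul_pos (mul_pos ha0 hcH) ?_
    positivity
  have key : ∀ s ∈ Set.Ioo (0:ℝ) (t/2),
      ENNReal.ofReal (A ^ K) * ENNReal.ofReal (s ^ (((1:ℝ)/2 - H) * K))
        ≤ ENNReal.ofReal (z_H H t s ^ K) := by
    intro s hsm
    obtain ⟨hs0, hs2⟩ := hsm
    have hzge : A * s ^ ((1:ℝ)/2 - H) ≤ z_H H t s := by
      rw [z_H, if_pos ⟨hs0, by linarith⟩]
      have hlb := inner_lb (by linarith : 1/2 < H) hH2 ht hs0 hs2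
      have hpre : 0 ≤ (H - 1/2) * c_H H * s ^ ((1:ℝ)/2 - H) :=
        mul_nonneg (mul_pos ha0 hcH).le (Real.rpow_nonneg hs0.le _)
      calc A * s ^ ((1:ℝ)/2 - H)
          = ((H - 1/2) * c_H H * s ^ ((1:ℝ)/2 - H)) *
              ((t/2) ^ (H - 1/2) * t ^ (H - 3/2) * (t/2)) := by rw [hA_def]; ring
        _ ≤ _ := mul_le_mul_of_nonneg_left hlb hpre
    have hofr : ENNReal.ofReal (A ^ K) * ENNReal.ofReal (s ^ (((1:ℝ)/2 - H) * K))
        = ENNReal.ofReal ((A * s ^ ((1:ℝ)/2 - H)) ^ K) := by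
      rw [← ENNReal.ofReal_mul (Real.rpow_nonneg hA.le K)]
      congr 1
      rw [Real.mul_rpow hA.le (Real.rpow_nonneg hs0.le _), Real.rpow_mul hs0.le]
    rw [hofr]
    exact ENNReal.ofReal_le_ofReal
      (Real.rpow_le_rpow (by positivity) hzge hK0.le)
  have h1 : (∫⁻ s in Set.Ioo (0:ℝ) (t/2), ENNReal.ofReal (s ^ (((1:ℝ)/2 - H) * K))) = ⊤ :=
    lint_rpow_top hq (by linarith)
  have h2 : (∫⁻ s in Set.Ioo (0:ℝ) (t/2),
      ENNReal.ofReal (A ^ K) * ENNReal.ofReal (s ^ (((1:ℝ)/2 - H) * K))) = ⊤ := by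
    rw [lintegral_const_mul' _ _ ENNReal.ofReal_ne_top, h1, ENNReal.mul_top
      (ENNReal.ofReal_pos.mpr (Real.rpow_pos_of_pos hA K)).ne']
  have h3 := setLIntegral_mono' (μ := volume) measurableSet_Ioo key
  rw [h2] at h3
  exact top_le_iff.1 (h3.trans (lintegral_mono_set (Set.Ioo_subset_Ioo le_rfl (by linarith))))

set_option maxHeartbeats 2000000 in
lemma fH_fin {K H t : ℝ} (hK : 2 < K) (hH : H ∈ Set.Ico (1/2 + 1/K) (1:ℝ)) (ht : 0 < t) :
    (∫⁻ s in Set.Iio t, ENNReal.ofReal (f_H H t s ^ K)) < ⊤ := by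
  obtain ⟨hH1, hH2⟩ := hH
  have hK0 : (0:ℝ) < K := by linarith
  have hKinv : 0 < 1/K := by positivity
  have ha0 : 0 < H - 1/2 := by linarith
  have ha1 : H - 1/2 < 1/2 := by linarith
  have hC : 0 ≤ C_H H :=
    div_nonneg (Real.sqrt_nonneg _) (Real.Gamma_pos_of_pos (by linarith : (0:ℝ) < H + 1/2)).le
  have hf0 : ∀ s, s < t → 0 ≤ f_H H t s := by
    intro s hs
    unfold f_H
    refine mul_nonneg hC (sub_nonneg.2 (Real.rpow_le_rpow (le_max_right _ _)
      (max_le_max (by linarith) le_rfl) (by linarith)))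
  have hsplit : Set.Iio t = Set.Iio (-t) ∪ Set.Ico (-t) t :=
    (Set.Iio_union_Ico_eq_Iio (by linarith : -t ≤ t)).symm
  have hdisj : Disjoint (Set.Iio (-t)) (Set.Ico (-t) t) :=
    (Set.Iio_disjoint_Ici le_rfl).mono_right Set.Ico_subset_Ici_self
  rw [hsplit, lintegral_union measurableSet_Ico hdisj]
  have hmid : (∫⁻ s in Set.Ico (-t) t, ENNReal.ofReal (f_H H t s ^ K)) < ⊤ := by
    have hb : ∀ s ∈ Set.Ico (-t) t,
        ENNReal.ofReal (f_H H t s ^ K)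
          ≤ ENNReal.ofReal ((C_H H * (2*t) ^ (H - 1/2)) ^ K) := by
      intro s hs
      refine ENNReal.ofReal_le_ofReal (Real.rpow_le_rpow (hf0 s hs.2) ?_ hK0.le)
      unfold f_H
      refine mul_le_mul_of_nonneg_left ?_ hC
      have h1 : max (t - s) 0 ^ (H - 1/2) ≤ (2*t) ^ (H - 1/2) :=
        Real.rpow_le_rpow (le_max_right _ _)
          (max_le (by linarith [hs.1]) (by linarith)) (by linarith)
      have h2 : 0 ≤ max (-s) 0 ^ (H - 1/2) := Real.rpow_nonneg (le_max_right _ _) _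
      linarith
    calc (∫⁻ s in Set.Ico (-t) t, ENNReal.ofReal (f_H H t s ^ K))
        ≤ ∫⁻ _ in Set.Ico (-t) t, ENNReal.ofReal ((C_H H * (2*t) ^ (H - 1/2)) ^ K) :=
          setLIntegral_mono' (μ := volume) measurableSet_Ico hb
      _ = ENNReal.ofReal ((C_H H * (2*t) ^ (H - 1/2)) ^ K) * volume (Set.Ico (-t) t) :=
          setLIntegral_const _ _
      _ < ⊤ := ENNReal.mul_lt_top ENNReal.ofReal_lt_top
          (by rw [Real.volume_Ico]; exact ENNReal.ofReal_lt_top)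
  have htail : (∫⁻ s in Set.Iio (-t), ENNReal.ofReal (f_H H t s ^ K)) < ⊤ := by
    set r : ℝ := (H - 1/2 - 1) * K with hr_def
    have hrlt : r < -1 := by nlinarith
    have hIf : IntegrableOn (fun x : ℝ => (C_H H * t) ^ K * x ^ r) (Set.Ioi t) :=
      (integrableOn_Ioi_rpow_of_lt hrlt ht).const_mul _
    have hIg : IntegrableOn (fun s : ℝ => (C_H H * t) ^ K * (-s) ^ r) (Set.Iio (-t)) := by
      have hpre : Set.Iio (-t) = Neg.neg ⁻¹' (Set.Ioi t) := by
        ext x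
        simp only [Set.mem_Iio, Set.mem_preimage, Set.mem_Ioi]
        constructor <;> intro h <;> linarith
      rw [hpre]
      exact ((Measure.measurePreserving_neg (volume : Measure ℝ)).integrableOn_comp_preimage
        (Homeomorph.neg ℝ).measurableEmbedding).2 hIf
    have hb : ∀ s ∈ Set.Iio (-t),
        ENNReal.ofReal (f_H H t s ^ K) ≤ ENNReal.ofReal ((C_H H * t) ^ K * (-s) ^ r) := by
      intro s hs
      have hy : (0:ℝ) < -s := by simp only [Set.mem_Iio] at hs; linarith
      have hts : t < -s := by simp only [Set.mem_Iio] at hs; linarith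
      have hflb : f_H H t s ≤ C_H H * t * (-s) ^ (H - 1/2 - 1) := by
        unfold f_H
        have hmax1 : max (t - s) 0 = t - s := max_eq_left (by linarith)
        have hmax2 : max (-s) 0 = -s := max_eq_left hy.le
        rw [hmax1, hmax2]
        have hkey : (t - s) ^ (H - 1/2) - (-s) ^ (H - 1/2)
            ≤ t * (-s) ^ (H - 1/2 - 1) := by
          have hu : (0:ℝ) ≤ t / (-s) := by positivity
          have hfact : t - s = (-s) * (1 + t / (-s)) := by
            have hsne : s ≠ 0 := by intro h; rw [h] at hy; simp at hy
            field_simp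
            ring
          have h1 : (t - s) ^ (H - 1/2) = (-s) ^ (H - 1/2) * (1 + t / (-s)) ^ (H - 1/2) := by
            rw [hfact, Real.mul_rpow hy.le (by linarith)]
          have h2 : (1 + t / (-s)) ^ (H - 1/2) ≤ 1 + (H - 1/2) * (t / (-s)) :=
            rpow_one_add_le_one_add_mul_self (by linarith) ha0.le (by linarith)
          have h3 : (-s) ^ (H - 1/2 - 1) = (-s) ^ (H - 1/2) / (-s) := by
            rw [Real.rpow_sub hy, Real.rpow_one]
          have h4 : (t - s) ^ (H - 1/2)
              ≤ (-s) ^ (H - 1/2) + (H - 1/2) * t * ((-s) ^ (H - 1/2) / (-s)) := by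
            rw [h1]
            have := mul_le_mul_of_nonneg_left h2 (Real.rpow_nonneg hy.le (H - 1/2))
            calc (-s) ^ (H - 1/2) * (1 + t / (-s)) ^ (H - 1/2)
                ≤ (-s) ^ (H - 1/2) * (1 + (H - 1/2) * (t / (-s))) := this
              _ = (-s) ^ (H - 1/2) + (H - 1/2) * t * ((-s) ^ (H - 1/2) / (-s)) := by
                  field_simp
          have h5 : 0 ≤ (-s) ^ (H - 1/2) / (-s) := by positivity
          rw [h3]
          nlinarith [mul_le_mul_of_nonneg_right (by linarith : H - 1/2 ≤ 1)
            (mul_nonneg ht.le h5)]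
        calc C_H H * ((t - s) ^ (H - 1/2) - (-s) ^ (H - 1/2))
            ≤ C_H H * (t * (-s) ^ (H - 1/2 - 1)) := mul_le_mul_of_nonneg_left hkey hC
          _ = C_H H * t * (-s) ^ (H - 1/2 - 1) := by ring
      refine ENNReal.ofReal_le_ofReal ?_
      have hCt : 0 ≤ C_H H * t := mul_nonneg hC ht.le
      calc f_H H t s ^ K
          ≤ (C_H H * t * (-s) ^ (H - 1/2 - 1)) ^ K :=
            Real.rpow_le_rpow (hf0 s (by linarith)) hflb hK0.le
        _ = (C_H H * t) ^ K * (-s) ^ r := by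
            rw [Real.mul_rpow hCt (Real.rpow_nonneg hy.le _), ← Real.rpow_mul hy.le, hr_def]
    calc (∫⁻ s in Set.Iio (-t), ENNReal.ofReal (f_H H t s ^ K))
        ≤ ∫⁻ s in Set.Iio (-t), ENNReal.ofReal ((C_H H * t) ^ K * (-s) ^ r) :=
          setLIntegral_mono' (μ := volume) measurableSet_Iio hb
      _ < ⊤ := by
          refine lt_of_le_of_ne le_top ?_
          have hmeas : AEStronglyMeasurable (fun s : ℝ => (C_H H * t) ^ K * (-s) ^ r)
              (volume.restrict (Set.Iio (-t))) :=
            ((measurable_id'.neg.pow_const r).const_mul _).aestronglyMeasurable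
          have hpos : 0 ≤ᵐ[volume.restrict (Set.Iio (-t))]
              fun s : ℝ => (C_H H * t) ^ K * (-s) ^ r := by
            rw [Filter.EventuallyLE, ae_restrict_iff' measurableSet_Iio]
            refine Filter.Eventually.of_forall fun s hs => ?_
            have hy : (0:ℝ) ≤ -s := by simp only [Set.mem_Iio] at hs; linarith
            exact mul_nonneg (Real.rpow_nonneg (mul_nonneg hC ht.le) _)
              (Real.rpow_nonneg hy _)
          exact (lintegral_ofReal_ne_top_iff_integrable hmeas hpos).2 hIg
  exact ENNReal.add_lt_top.2 ⟨htail, hmid⟩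

/-- For real `K > 2`, `H ∈ [1/2 + 1/K, 1)` and `t > 0`:
`∫_{−∞}^t (f_H(t,s))^K ds < ∫_0^t (z_H(t,s))^K ds`; in particular the left-hand side is
finite while the right-hand side is infinite. -/
theorem fH_pow_lt_zH_pow (K H t : ℝ) (hK : 2 < K)
    (hH : H ∈ Set.Ico (1/2 + 1/K) (1:ℝ)) (ht : 0 < t) :
    (∫⁻ s in Set.Iio t, ENNReal.ofReal (f_H H t s ^ K))
        < (∫⁻ s in Set.Ioo (0:ℝ) t, ENNReal.ofReal (z_H H t s ^ K))
      ∧ (∫⁻ s in Set.Iio t, ENNReal.ofReal (f_H H t s ^ K)) < ⊤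
      ∧ (∫⁻ s in Set.Ioo (0:ℝ) t, ENNReal.ofReal (z_H H t s ^ K)) = ⊤ := by
  have h2 := fH_fin hK hH ht
  have h3 := zH_top hK hH ht
  refine ⟨?_, h2, h3⟩
  rw [h3]
  exact h2
end

section
/- Let H ∈ (1/2,1) and 0 < s < 1. Then (H−1/2)·∫_s^1 u^{H−1/2}(u−s)^{H−3/2} du ≥ (1/2)·(1−s)^{H−1/2}·(1 + s^{2H−1}). -/
open MeasureTheory Set

private noncomputable def Faux (s p u : ℝ) : ℝ :=
  (1/2) * (u ^ p * (u - s) ^ p) + (1/2) * s ^ (2*p) * ((u - s) ^ p * u ^ (-p))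

private noncomputable def phiAux (s p u : ℝ) : ℝ :=
  (1/2) * p * (u ^ (p-1) * (u - s) ^ p + u ^ p * (u - s) ^ (p-1))
    + (1/2) * s ^ (2*p) * (p * s * (u ^ (-p-1) * (u - s) ^ (p-1)))

/-- For `H ∈ (1/2,1)` and `0 < s < 1`:
`(H−1/2)∫_s^1 u^{H−1/2}(u−s)^{H−3/2} du ≥ (1/2)(1−s)^{H−1/2}(1 + s^{2H−1})`. -/
theorem kernel_integral_lower_bound (H s : ℝ) (hH : H ∈ Set.Ioo (1/2 : ℝ) 1)
    (hs : s ∈ Set.Ioo (0:ℝ) 1) :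
    (1/2) * (1 - s) ^ (H - 1/2) * (1 + s ^ (2*H - 1))
      ≤ (H - 1/2) * ∫ u in Set.Ioo s 1, u ^ (H - 1/2) * (u - s) ^ (H - 3/2) := by
  obtain ⟨hH1, hH2⟩ := hH
  obtain ⟨hs0, hs1⟩ := hs
  have e1 : H - 3/2 = (H - 1/2) - 1 := by ring
  have e2 : 2*H - 1 = 2*(H - 1/2) := by ring
  rw [e1, e2]
  set p : ℝ := H - 1/2 with hpdef
  have hp0 : 0 < p := by rw [hpdef]; linarith
  have hp1 : p < 1/2 := by rw [hpdef]; linarith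
  have hs1' : s ≤ (1:ℝ) := hs1.le
  -- integrability of the basic singular kernel on Ioc s 1
  have hgIoc : IntegrableOn (fun u : ℝ => (u - s) ^ (p - 1)) (Ioc s 1) volume := by
    have h1 : IntervalIntegrable (fun x : ℝ => x ^ (p - 1)) volume 0 (1 - s) :=
      intervalIntegral.intervalIntegrable_rpow' (by linarith)
    have h2 := h1.comp_sub_right s
    rw [show (0:ℝ) + s = s by ring, show 1 - s + s = (1:ℝ) by ring,
      intervalIntegrable_iff_integrableOn_Ioc_of_le hs1'] at h2
    exact h2
  -- pointwise facts on Ioc s 1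
  have key : ∀ u ∈ Ioc s 1,
      0 ≤ phiAux s p u ∧ phiAux s p u ≤ p * (u ^ p * (u - s) ^ (p - 1)) ∧
        u ^ p * (u - s) ^ (p - 1) ≤ (u - s) ^ (p - 1) := by
    intro u hu
    have hsu : s < u := hu.1
    have hu0 : 0 < u := lt_trans hs0 hsu
    have hu1 : u ≤ 1 := hu.2
    have hus : 0 < u - s := sub_pos.2 hsu
    have ha : 0 ≤ u ^ (p-1) := Real.rpow_nonneg hu0.le _
    have hb : 0 ≤ (u - s) ^ (p-1) := Real.rpow_nonneg hus.le _
    have hc : 0 ≤ u ^ (-p-1) := Real.rpow_nonneg hu0.le _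
    have hd : 0 ≤ (u - s) ^ p := Real.rpow_nonneg hus.le _
    have hup : 0 ≤ u ^ p := Real.rpow_nonneg hu0.le _
    have hsp : 0 ≤ s ^ (2*p) := Real.rpow_nonneg hs0.le _
    have e3 : u ^ (p-1) * u = u ^ p := by
      rw [← Real.rpow_add_one hu0.ne']; norm_num
    have e4 : (u - s) ^ (p-1) * (u - s) = (u - s) ^ p := by
      rw [← Real.rpow_add_one hus.ne']; norm_num
    have e6 : u ^ (2*p) * u ^ (-p-1) = u ^ (p-1) := by
      rw [← Real.rpow_add hu0]; congr 1; ring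
    have hle : s ^ (2*p) ≤ u ^ (2*p) :=
      Real.rpow_le_rpow hs0.le hsu.le (by linarith)
    refine ⟨?_, ?_, ?_⟩
    · unfold phiAux
      apply add_nonneg
      · apply mul_nonneg (mul_nonneg (by norm_num) hp0.le)
        exact add_nonneg (mul_nonneg ha hd) (mul_nonneg hup hb)
      · exact mul_nonneg (mul_nonneg (by norm_num) hsp)
          (mul_nonneg (mul_nonneg hp0.le hs0.le) (mul_nonneg hc hb))
    · unfold phiAux
      rw [← e3, ← e4, ← e6]
      nlinarith [mul_nonneg (mul_nonneg (mul_nonneg (mul_nonneg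
        (sub_nonneg.2 hle) hc) hb) hs0.le) hp0.le]
    · have hu1' : u ^ p ≤ 1 := Real.rpow_le_one hu0.le hu1 hp0.le
      nlinarith
  -- integrability of phiAux and of the main integrand on Ioc s 1
  have hfm : AEStronglyMeasurable (fun u : ℝ => u ^ p * (u - s) ^ (p-1))
      (volume.restrict (Ioc s 1)) := by
    apply Measurable.aestronglyMeasurable
    fun_prop
  have hφm : AEStronglyMeasurable (phiAux s p) (volume.restrict (Ioc s 1)) := by
    apply Measurable.aestronglyMeasurable
    unfold phiAux
    fun_prop
  have hfint : IntegrableOn (fun u : ℝ => u ^ p * (u - s) ^ (p-1)) (Ioc s 1) volume := by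
    apply Integrable.mono' hgIoc hfm
    filter_upwards [ae_restrict_mem measurableSet_Ioc] with u hu
    obtain ⟨h0, h1, h2⟩ := key u hu
    have hsu : s < u := hu.1
    have hu0 : 0 < u := lt_trans hs0 hsu
    have hus : 0 < u - s := sub_pos.2 hsu
    rw [Real.norm_eq_abs, abs_of_nonneg
      (mul_nonneg (Real.rpow_nonneg hu0.le _) (Real.rpow_nonneg hus.le _))]
    exact h2
  have hφint : IntegrableOn (phiAux s p) (Ioc s 1) volume := by
    apply Integrable.mono' (hfint.const_mul p) hφm
    filter_upwards [ae_restrict_mem measurableSet_Ioc] with u hu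
    obtain ⟨h0, h1, h2⟩ := key u hu
    rw [Real.norm_eq_abs, abs_of_nonneg h0]
    exact h1
  -- derivative of Faux
  have hFd : ∀ u ∈ Ioo s 1, HasDerivAt (Faux s p) (phiAux s p u) u := by
    intro u hu
    have hsu : s < u := hu.1
    have hu0 : 0 < u := lt_trans hs0 hsu
    have hus : 0 < u - s := sub_pos.2 hsu
    have h1 : HasDerivAt (fun x : ℝ => x ^ p) (p * u ^ (p-1)) u :=
      Real.hasDerivAt_rpow_const (Or.inl hu0.ne')
    have h2 : HasDerivAt (fun x : ℝ => (x - s) ^ p) (p * (u - s) ^ (p-1)) u := by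
      have := (HasDerivAt.rpow_const (p := p) ((hasDerivAt_id u).sub_const s)
        (Or.inl hus.ne'))
      simpa using this
    have h3 : HasDerivAt (fun x : ℝ => x ^ (-p)) ((-p) * u ^ (-p-1)) u := by
      have := Real.hasDerivAt_rpow_const (p := -p) (x := u) (Or.inl hu0.ne')
      convert this using 2

    have hd := ((h1.mul h2).const_mul (1/2 : ℝ)).add
      ((h2.mul h3).const_mul ((1/2) * s ^ (2*p)))
    have e4 : (u - s) ^ (p-1) * (u - s) = (u - s) ^ p := by
      rw [← Real.rpow_add_one hus.ne']; norm_num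
    have e5 : u ^ (-p-1) * u = u ^ (-p) := by
      rw [← Real.rpow_add_one hu0.ne']; norm_num
    have e3 : u ^ (p-1) * u = u ^ p := by
      rw [← Real.rpow_add_one hu0.ne']; norm_num
    convert hd using 1
    · rfl
    · rfl
    · rfl
    unfold phiAux
    rw [← e4, ← e5, ← e3]
    ring
  -- continuity of Faux on Icc s 1
  have hFc : ContinuousOn (Faux s p) (Icc s 1) := by
    have c1 : ContinuousOn (fun u : ℝ => u ^ p) (Icc s 1) :=
      continuousOn_id.rpow_const fun x _ => Or.inr hp0.le
    have c2 : ContinuousOn (fun u : ℝ => (u - s) ^ p) (Icc s 1) :=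
      (continuousOn_id.sub continuousOn_const).rpow_const fun x _ => Or.inr hp0.le
    have c3 : ContinuousOn (fun u : ℝ => u ^ (-p)) (Icc s 1) :=
      continuousOn_id.rpow_const fun x hx => Or.inl (by have := hx.1; simp; linarith)
    unfold Faux
    exact (continuousOn_const.mul (c1.mul c2)).add
      (continuousOn_const.mul (c2.mul c3))
  -- FTC
  have hφII : IntervalIntegrable (phiAux s p) volume s 1 := by
    rw [intervalIntegrable_iff_integrableOn_Ioc_of_le hs1']
    exact hφint
  have hFTC : ∫ u in s..1, phiAux s p u = Faux s p 1 - Faux s p s :=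
    intervalIntegral.integral_eq_sub_of_hasDeriv_right_of_le hs1' hFc
      (fun x hx => (hFd x hx).hasDerivWithinAt) hφII
  have hFval : Faux s p 1 - Faux s p s = (1/2) * (1 - s) ^ p * (1 + s ^ (2*p)) := by
    unfold Faux
    rw [Real.one_rpow, Real.one_rpow, sub_self, Real.zero_rpow hp0.ne']
    ring
  calc (1/2) * (1 - s) ^ p * (1 + s ^ (2*p))
      = ∫ u in s..1, phiAux s p u := by rw [hFTC, hFval]
    _ = ∫ u in Ioc s 1, phiAux s p u := intervalIntegral.integral_of_le hs1'
    _ ≤ ∫ u in Ioc s 1, p * (u ^ p * (u - s) ^ (p - 1)) :=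
        setIntegral_mono_on hφint (hfint.const_mul p) measurableSet_Ioc
          (fun u hu => (key u hu).2.1)
    _ = p * ∫ u in Ioc s 1, u ^ p * (u - s) ^ (p - 1) := integral_const_mul p _
    _ = p * ∫ u in Ioo s 1, u ^ p * (u - s) ^ (p - 1) := by
        rw [integral_Ioc_eq_integral_Ioo]
end

section
/- Let H ∈ (1/2,1). Then ∫_0^1 (z_H(1,s))^3 ds ≥ (c_H^3/8)·∫_0^1 s^{3(1/2−H)}(1−s)^{3(H−1/2)}(1 + s^{2H−1})^3 ds. -/
open MeasureTheory Set

lemma cH_nonneg (H : ℝ) (hH : H ∈ Set.Ioo (1/2 : ℝ) 1) : 0 ≤ c_H H := by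
  have h1 : 0 < Real.Gamma (H + 1/2) := Real.Gamma_pos_of_pos (by linarith [hH.1])
  exact mul_nonneg (inv_nonneg.2 h1.le) (Real.sqrt_nonneg _)

lemma key_integral (H s : ℝ) (hH : H ∈ Set.Ioo (1/2 : ℝ) 1) (hs : 0 < s) (hs1 : s < 1) :
    (1 - s) ^ (H - 1/2) * (1 + s ^ (2*H - 1)) / 2
      ≤ (H - 1/2) * ∫ u in Set.Ioo s 1, u ^ (H - 1/2) * (u - s) ^ (H - 3/2) := by
  obtain ⟨h1, h2⟩ := hH
  set p := H - 1/2 with hp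
  have hp0 : 0 < p := by simp only [hp]; linarith
  have hps : H - 3/2 = p - 1 := by simp only [hp]; ring
  have h2p : 2*H - 1 = 2*p := by simp only [hp]; ring
  set D := (1 - s) ^ p with hD
  have hD0 : 0 ≤ D := Real.rpow_nonneg (by linarith) p
  set F : ℝ → ℝ := fun u => u ^ p * (u - s) ^ p - D * u ^ (2*p) / 2 with hF
  set G : ℝ → ℝ := fun u =>
    (p * u ^ (p-1) * (u - s) ^ p + p * (u ^ p * (u - s) ^ (p-1)))
      - D * (2*p * u ^ (2*p-1)) / 2 with hG
  -- integrability of the singular part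
  have hsing : IntervalIntegrable (fun u : ℝ => (u - s) ^ (p-1)) MeasureTheory.volume s 1 := by
    have h0 : IntervalIntegrable (fun x : ℝ => x ^ (p-1)) MeasureTheory.volume 0 (1 - s) :=
      intervalIntegral.intervalIntegrable_rpow' (by linarith)
    have := h0.comp_sub_right s
    simpa using this
  have hcont_up : ContinuousOn (fun u : ℝ => u ^ p) (Set.uIcc s 1) :=
    (continuous_id.rpow_const (fun x => Or.inr hp0.le)).continuousOn
  have hintf : IntervalIntegrable (fun u : ℝ => u ^ p * (u - s) ^ (p-1))
      MeasureTheory.volume s 1 := hsing.continuousOn_mul hcont_up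
  have hintpf : IntervalIntegrable (fun u : ℝ => p * (u ^ p * (u - s) ^ (p-1)))
      MeasureTheory.volume s 1 := (hintf.const_mul p)
  have huIcc : Set.uIcc s 1 = Set.Icc s 1 := Set.uIcc_of_le hs1.le
  have hcont_ne : ∀ u ∈ Set.Icc s 1, u ≠ 0 := fun u hu => (lt_of_lt_of_le hs hu.1).ne'
  -- integrability of G
  have hintG : IntervalIntegrable G MeasureTheory.volume s 1 := by
    have t1 : IntervalIntegrable (fun u : ℝ => p * u ^ (p-1) * (u - s) ^ p)
        MeasureTheory.volume s 1 := by
      apply ContinuousOn.intervalIntegrable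
      rw [huIcc]
      apply ContinuousOn.mul
      · exact continuousOn_const.mul (continuousOn_id.rpow_const
          (fun u hu => Or.inl (hcont_ne u hu)))
      · exact ((continuous_id.sub continuous_const).rpow_const
          (fun x => Or.inr hp0.le)).continuousOn
    have t3 : IntervalIntegrable (fun u : ℝ => D * (2*p * u ^ (2*p-1)) / 2)
        MeasureTheory.volume s 1 := by
      apply ContinuousOn.intervalIntegrable
      rw [huIcc]
      exact (continuousOn_const.mul (continuousOn_const.mul
        (continuousOn_id.rpow_const (fun u hu => Or.inl (hcont_ne u hu))))).div_const 2
    exact (t1.add hintpf).sub t3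
  -- FTC
  have hFTC : ∫ u in s..1, G u = F 1 - F s := by
    apply intervalIntegral.integral_eq_sub_of_hasDeriv_right_of_le hs1.le _ _ hintG
    · simp only [hF]
      apply ContinuousOn.sub
      · exact (((continuous_id.rpow_const (fun x => Or.inr hp0.le)).mul
          ((continuous_id.sub continuous_const).rpow_const
            (fun x => Or.inr hp0.le))).continuousOn)
      · exact ((continuous_const.mul (continuous_id.rpow_const
          (fun x => Or.inr (by linarith)))).div_const 2).continuousOn
    · intro u hu
      have hu0 : u ≠ 0 := (lt_trans hs hu.1).ne'
      have hus : u - s ≠ 0 := (sub_pos.2 hu.1).ne'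
      have d1 : HasDerivAt (fun u : ℝ => u ^ p) (p * u ^ (p-1)) u :=
        Real.hasDerivAt_rpow_const (Or.inl hu0)
      have d2 : HasDerivAt (fun u : ℝ => (u - s) ^ p) (p * (u - s) ^ (p-1)) u := by
        simpa using ((hasDerivAt_id u).sub_const s).rpow_const (Or.inl hus)
      have d3 : HasDerivAt (fun u : ℝ => u ^ (2*p)) (2*p * u ^ (2*p-1)) u :=
        Real.hasDerivAt_rpow_const (Or.inl hu0)
      have := ((d1.mul d2).sub ((d3.const_mul D).div_const 2))
      have heq : p * u ^ (p-1) * (u - s) ^ p + u ^ p * (p * (u - s) ^ (p-1))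
          - D * (2*p * u ^ (2*p-1)) / 2 = G u := by simp only [hG]; ring
      exact (heq ▸ this).hasDerivWithinAt
  -- pointwise comparison on Icc
  have hmono : ∫ u in s..1, G u ≤ ∫ u in s..1, p * (u ^ p * (u - s) ^ (p-1)) := by
    apply intervalIntegral.integral_mono_on hs1.le hintG hintpf
    intro u hu
    have hu0 : 0 < u := lt_of_lt_of_le hs hu.1
    simp only [hG]
    have key : (u - s) ^ p ≤ D * u ^ p := by
      have h1 : u - s ≤ (1 - s) * u := by nlinarith [hu.2, hs.le]
      calc (u - s) ^ p ≤ ((1 - s) * u) ^ p :=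
            Real.rpow_le_rpow (by linarith [hu.1]) h1 hp0.le
        _ = D * u ^ p := Real.mul_rpow (by linarith) hu0.le
    have hsplit : u ^ (2*p-1) = u ^ (p-1) * u ^ p := by
      rw [← Real.rpow_add hu0]; ring_nf
    have hup1 : 0 ≤ u ^ (p-1) := Real.rpow_nonneg hu0.le _
    have : u ^ (p-1) * (u - s) ^ p ≤ u ^ (p-1) * (D * u ^ p) :=
      mul_le_mul_of_nonneg_left key hup1
    have hD2 : D * (2*p * u ^ (2*p-1)) / 2 = p * (u ^ (p-1) * (D * u ^ p)) := by
      rw [hsplit]; ring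
    nlinarith [mul_le_mul_of_nonneg_left this hp0.le]
  -- compute F 1 - F s
  have hF1 : F 1 - F s = (1 - s) ^ p * (1 + s ^ (2*p)) / 2 := by
    simp only [hF, hD, Real.one_rpow, Real.zero_rpow hp0.ne', sub_self, one_mul, mul_one]
    ring
  -- convert interval integral to set integral
  have hconv : ∫ u in s..1, p * (u ^ p * (u - s) ^ (p-1))
      = p * ∫ u in Set.Ioo s 1, u ^ p * (u - s) ^ (p-1) := by
    rw [intervalIntegral.integral_of_le hs1.le, MeasureTheory.integral_Ioc_eq_integral_Ioo,
      MeasureTheory.integral_const_mul]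
  rw [hps, h2p]
  calc (1 - s) ^ p * (1 + s ^ (2*p)) / 2 = F 1 - F s := hF1.symm
    _ = ∫ u in s..1, G u := hFTC.symm
    _ ≤ ∫ u in s..1, p * (u ^ p * (u - s) ^ (p-1)) := hmono
    _ = p * ∫ u in Set.Ioo s 1, u ^ p * (u - s) ^ (p-1) := hconv

lemma zH_lower (H s : ℝ) (hH : H ∈ Set.Ioo (1/2 : ℝ) 1) (hs : 0 < s) (hs1 : s < 1) :
    c_H H / 2 * (s ^ ((1:ℝ)/2 - H) * ((1 - s) ^ (H - 1/2) * (1 + s ^ (2*H - 1))))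
      ≤ z_H H 1 s := by
  have key := key_integral H s hH hs hs1
  have hc := cH_nonneg H hH
  have hsp : (0:ℝ) ≤ s ^ ((1:ℝ)/2 - H) := Real.rpow_nonneg hs.le _
  unfold z_H
  rw [if_pos ⟨hs, hs1⟩]
  have h := mul_le_mul_of_nonneg_left key (mul_nonneg hc hsp)
  calc c_H H / 2 * (s ^ ((1:ℝ)/2 - H) * ((1 - s) ^ (H - 1/2) * (1 + s ^ (2*H - 1))))
      = c_H H * s ^ ((1:ℝ)/2 - H) * ((1 - s) ^ (H - 1/2) * (1 + s ^ (2*H - 1)) / 2) := by ring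
    _ ≤ c_H H * s ^ ((1:ℝ)/2 - H)
        * ((H - 1/2) * ∫ u in Set.Ioo s 1, u ^ (H - 1/2) * (u - s) ^ (H - 3/2)) := h
    _ = (H - 1/2) * c_H H * s ^ ((1:ℝ)/2 - H)
        * ∫ u in Set.Ioo s 1, u ^ (H - 1/2) * (u - s) ^ (H - 3/2) := by ring



/-- For `H ∈ (1/2,1)`:
`∫_0^1 (z_H(1,s))^3 ds ≥ (c_H^3/8) ∫_0^1 s^{3(1/2−H)}(1−s)^{3(H−1/2)}(1+s^{2H−1})^3 ds`
(in the extended reals). -/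
theorem zH_cube_integral_lower_bound (H : ℝ) (hH : H ∈ Set.Ioo (1/2 : ℝ) 1) :
    ENNReal.ofReal (c_H H ^ 3 / 8) *
        ∫⁻ s in Set.Ioo (0:ℝ) 1,
          ENNReal.ofReal
            (s ^ (3 * ((1:ℝ)/2 - H)) * (1 - s) ^ (3 * (H - 1/2)) * (1 + s ^ (2*H - 1)) ^ 3)
      ≤ ∫⁻ s in Set.Ioo (0:ℝ) 1, ENNReal.ofReal (z_H H 1 s ^ 3) := by
  have hc := cH_nonneg H hH
  have hC : (0:ℝ) ≤ c_H H ^ 3 / 8 := by positivity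
  rw [← MeasureTheory.lintegral_const_mul' _ _ ENNReal.ofReal_ne_top]
  apply MeasureTheory.lintegral_mono_ae
  filter_upwards [MeasureTheory.ae_restrict_mem measurableSet_Ioo] with s hs
  obtain ⟨hs0, hs1⟩ := hs
  rw [← ENNReal.ofReal_mul hC]
  apply ENNReal.ofReal_le_ofReal
  have hz := zH_lower H s hH hs0 hs1
  set B := c_H H / 2 * (s ^ ((1:ℝ)/2 - H) * ((1 - s) ^ (H - 1/2) * (1 + s ^ (2*H - 1)))) with hB
  have hB0 : 0 ≤ B := by
    apply mul_nonneg (by positivity)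
    apply mul_nonneg (Real.rpow_nonneg hs0.le _)
    apply mul_nonneg (Real.rpow_nonneg (by linarith) _)
    have : (0:ℝ) ≤ s ^ (2*H - 1) := Real.rpow_nonneg hs0.le _
    linarith
  have hcube : B ^ 3 ≤ z_H H 1 s ^ 3 := pow_le_pow_left₀ hB0 hz 3
  have e1 : (s ^ ((1:ℝ)/2 - H)) ^ (3:ℕ) = s ^ (3 * ((1:ℝ)/2 - H)) := by
    rw [← Real.rpow_natCast (s ^ ((1:ℝ)/2 - H)) 3, ← Real.rpow_mul hs0.le]
    norm_num [mul_comm]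
  have e2 : ((1 - s) ^ (H - 1/2)) ^ (3:ℕ) = (1 - s) ^ (3 * (H - 1/2)) := by
    rw [← Real.rpow_natCast ((1 - s) ^ (H - 1/2)) 3, ← Real.rpow_mul (by linarith : (0:ℝ) ≤ 1 - s)]
    norm_num [mul_comm]
  calc c_H H ^ 3 / 8 *
        (s ^ (3 * ((1:ℝ)/2 - H)) * (1 - s) ^ (3 * (H - 1/2)) * (1 + s ^ (2*H - 1)) ^ 3)
      = B ^ 3 := by rw [hB, ← e1, ← e2]; ring
    _ ≤ z_H H 1 s ^ 3 := hcube
end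

section
/- Let p ∈ (0, 1/3). Then (1/8)·∫_0^1 s^{−3p}(1−s)^{3p}(1 + s^{2p})^3 ds ≥ 1/(3p+1) + 9p^3·(38p^2 + 21p + 3)/∏_{k=1}^6 (kp+1). -/
open MeasureTheory Set

lemma cubic_le_exp {x : ℝ} (hx : 0 ≤ x) : 1 + x + x^2/2 + x^3/6 ≤ Real.exp x := by
  have h := Real.sum_le_exp_of_nonneg hx 4
  simp [Finset.sum_range_succ, Nat.factorial] at h
  nlinarith [h]

lemma cosh_bound {x : ℝ} (hx : 0 ≤ x) : 2 + x^2 ≤ Real.exp x + Real.exp (-x) := by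
  have h1 := cubic_le_exp hx
  have h2 : Real.exp x * Real.exp (-x) = 1 := by rw [← Real.exp_add]; simp
  have h4 : 0 < Real.exp (-x) := Real.exp_pos (-x)
  have key : (2 + x^2) * Real.exp x ≤ (Real.exp x)^2 + 1 := by
    nlinarith [mul_nonneg (sub_nonneg.2 h1) (by nlinarith [Real.exp_pos x] :
      (0:ℝ) ≤ Real.exp x + (1 + x + x^2/2 + x^3/6) - 2 - x^2),
      pow_nonneg hx 4, pow_nonneg hx 6]
  nlinarith [mul_nonneg (sub_nonneg.2 key) h4.le]

lemma log_bound {s : ℝ} (h0 : 0 < s) (h1 : s < 1) :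
    (1-s) + (1-s)^2/2 ≤ -Real.log s := by
  set f : ℝ → ℝ := fun y => Real.log y + ((1-y) + (1-y)^2/2) with hf
  have hderiv : ∀ y : ℝ, 0 < y → HasDerivAt f (y⁻¹ + (-1 + (1-y)*(-1))) y := by
    intro y hy
    have hlog : HasDerivAt (fun y : ℝ => Real.log y) y⁻¹ y := Real.hasDerivAt_log hy.ne'
    have h2 : HasDerivAt (fun y : ℝ => 1 - y) (-1) y := (hasDerivAt_id y).const_sub 1
    have h3 : HasDerivAt (fun y : ℝ => (1-y)^2/2) (2 * (1-y)^1 * (-1) / 2) y :=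
      (h2.pow 2).div_const 2
    have := hlog.add (h2.add (by convert h3 using 1; ring :
      HasDerivAt (fun y : ℝ => (1-y)^2/2) ((1-y)*(-1)) y))
    exact this
  have hmono : MonotoneOn f (Set.Icc s 1) := by
    apply monotoneOn_of_deriv_nonneg (convex_Icc s 1)
    · intro y hy
      exact ((hderiv y (lt_of_lt_of_le h0 hy.1)).differentiableAt.continuousAt).continuousWithinAt
    · intro y hy
      rw [interior_Icc] at hy
      exact ((hderiv y (h0.trans hy.1)).differentiableAt).differentiableWithinAt
    · intro y hy
      rw [interior_Icc] at hy
      rw [(hderiv y (h0.trans hy.1)).deriv]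
      have hy0 : 0 < y := h0.trans hy.1
      have : y⁻¹ + (-1 + (1-y)*(-1)) = (1-y)^2 / y := by field_simp; ring
      rw [this]; positivity
  have := hmono (Set.left_mem_Icc.2 h1.le) (Set.right_mem_Icc.2 h1.le) h1.le
  simp [hf] at this
  linarith

lemma rpow_Ioo_integrableOn {r : ℝ} (hr : -1 < r) :
    IntegrableOn (fun s : ℝ => (1-s) ^ r) (Set.Ioo (0:ℝ) 1) := by
  have h : IntervalIntegrable (fun x : ℝ => x ^ r) volume 0 1 :=
    intervalIntegral.intervalIntegrable_rpow' hr
  have h2 : IntervalIntegrable (fun x : ℝ => (1 - x) ^ r) volume 0 1 := by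
    have := h.comp_sub_left 1
    simpa using this.symm
  exact (intervalIntegrable_iff_integrableOn_Ioo_of_le (by norm_num)).mp h2

lemma rpow_Ioo_integral {r : ℝ} (hr : -1 < r) :
    ∫ s in Set.Ioo (0:ℝ) 1, (1-s) ^ r = 1/(r+1) := by
  rw [← MeasureTheory.integral_Ioc_eq_integral_Ioo,
    ← intervalIntegral.integral_of_le (by norm_num : (0:ℝ) ≤ 1)]
  have h := intervalIntegral.integral_comp_sub_left (a := (0:ℝ)) (b := 1)
    (fun x : ℝ => x ^ r) 1
  simp only [sub_zero, sub_self] at h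
  rw [h, integral_rpow (Or.inl hr), Real.one_rpow,
    Real.zero_rpow (by linarith : r + 1 ≠ 0)]
  norm_num

lemma pair_bound {s q : ℝ} (h0 : 0 < s) (h1 : s < 1) (hq : 0 ≤ q) :
    2 + q^2 * ((1-s) + (1-s)^2/2)^2 ≤ s ^ (-q) + s ^ q := by
  set w : ℝ := (1-s) + (1-s)^2/2 with hw
  have hw0 : 0 ≤ w := by rw [hw]; nlinarith [sq_nonneg (1-s)]
  have hL : w ≤ -Real.log s := log_bound h0 h1
  have hqL : 0 ≤ q * (-Real.log s) := mul_nonneg hq (le_trans hw0 hL)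
  have hc := cosh_bound hqL
  have e1 : s ^ (-q) = Real.exp (q * (-Real.log s)) := by
    rw [Real.rpow_def_of_pos h0]; ring_nf
  have e2 : s ^ q = Real.exp (-(q * (-Real.log s))) := by
    rw [Real.rpow_def_of_pos h0]; ring_nf
  have hsq : q^2 * w^2 ≤ (q * (-Real.log s))^2 := by
    have : (q*w)^2 ≤ (q * (-Real.log s))^2 := by
      apply pow_le_pow_left₀ (mul_nonneg hq hw0) (mul_le_mul_of_nonneg_left hL hq)
    nlinarith [this]
  rw [e1, e2]
  nlinarith [hc]

lemma finalpoly (p : ℝ) (h1 : 0 < p) (h2 : p < 1/3) :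
    0 ≤ 228 - (2709/2)*p - 13479*p^2 + 28854*p^3 + 362145*p^4 + (1742877/2)*p^5
      + 919890*p^6 + 457326*p^7 + 87480*p^8 := by
  nlinarith [mul_pos h1 h1, mul_pos (mul_pos h1 h1) h1, sq_nonneg (p - 3/25),
    mul_nonneg (mul_nonneg h1.le h1.le) (sq_nonneg (p - 3/25)),
    mul_nonneg (sq_nonneg p) (sq_nonneg (p - 3/25)),
    mul_nonneg (mul_nonneg (sq_nonneg p) (sq_nonneg p)) (sq_nonneg (p - 3/25)),
    pow_pos h1 4, pow_pos h1 5, pow_pos h1 6, pow_pos h1 7, pow_pos h1 8]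

/-- For `p ∈ (0,1/3)`:
`(1/8)∫_0^1 s^{−3p}(1−s)^{3p}(1+s^{2p})^3 ds
  ≥ 1/(3p+1) + 9p^3(38p^2+21p+3)/∏_{k=1}^6 (kp+1)`. -/
theorem alpha_p1_lower_bound (p : ℝ) (hp : p ∈ Set.Ioo (0:ℝ) (1/3)) :
    1 / (3*p + 1) + 9 * p^3 * (38*p^2 + 21*p + 3) /
        ((p+1) * (2*p+1) * (3*p+1) * (4*p+1) * (5*p+1) * (6*p+1))
      ≤ (1/8) * ∫ s in Set.Ioo (0:ℝ) 1,
          s ^ (-(3*p)) * (1 - s) ^ (3*p) * (1 + s ^ (2*p)) ^ 3 := by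
  obtain ⟨hp0, hp3⟩ := hp
  set F : ℝ → ℝ := fun s => s ^ (-(3*p)) * (1 - s) ^ (3*p) * (1 + s ^ (2*p)) ^ 3 with hF
  set G : ℝ → ℝ := fun s => 8*(1-s)^(3*p) + 12*p^2*(1-s)^(3*p+2)
      + 12*p^2*(1-s)^(3*p+3) + 3*p^2*(1-s)^(3*p+4) with hG
  have hpt : ∀ s ∈ Set.Ioo (0:ℝ) 1, G s ≤ F s := by
    rintro s ⟨hs0, hs1⟩
    have ht0 : (0:ℝ) < 1 - s := by linarith
    have hA : (0:ℝ) < (1-s) ^ (3*p) := Real.rpow_pos_of_pos ht0 _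
    have expand : F s = (1-s)^(3*p) *
        ((s ^ (-(3*p)) + s ^ (3*p)) + 3*(s ^ (-p) + s ^ p)) := by
      have m1 : s ^ (2*p) * s ^ (-(3*p)) = s ^ (-p) := by
        rw [← Real.rpow_add hs0]; ring_nf
      have m2 : s ^ (2*p) * s ^ (-p) = s ^ p := by
        rw [← Real.rpow_add hs0]; ring_nf
      have m3 : s ^ (2*p) * s ^ p = s ^ (3*p) := by
        rw [← Real.rpow_add hs0]; ring_nf
      have key : s ^ (-(3*p)) * (1 + s ^ (2*p))^3 =
          s ^ (-(3*p)) + 3*(s ^ (2*p) * s ^ (-(3*p)))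
          + 3*(s ^ (2*p) * (s ^ (2*p) * s ^ (-(3*p))))
          + s ^ (2*p) * (s ^ (2*p) * (s ^ (2*p) * s ^ (-(3*p)))) := by ring
      rw [hF]; dsimp only
      rw [show s ^ (-(3*p)) * (1 - s) ^ (3*p) * (1 + s ^ (2*p)) ^ 3
          = (1-s)^(3*p) * (s ^ (-(3*p)) * (1 + s ^ (2*p))^3) by ring, key, m1, m2, m3]
      ring
    have expandG : G s = (1-s)^(3*p) *
        (8 + 12*p^2*((1-s) + (1-s)^2/2)^2) := by
      have k2 : (1-s)^(3*p+2) = (1-s)^(3*p) * (1-s)^2 := by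
        rw [Real.rpow_add ht0, show ((2:ℝ)) = ((2:ℕ):ℝ) by norm_num, Real.rpow_natCast]
      have k3 : (1-s)^(3*p+3) = (1-s)^(3*p) * (1-s)^3 := by
        rw [Real.rpow_add ht0, show ((3:ℝ)) = ((3:ℕ):ℝ) by norm_num, Real.rpow_natCast]
      have k4 : (1-s)^(3*p+4) = (1-s)^(3*p) * (1-s)^4 := by
        rw [Real.rpow_add ht0, show ((4:ℝ)) = ((4:ℕ):ℝ) by norm_num, Real.rpow_natCast]
      rw [hG]; dsimp only
      rw [k2, k3, k4]; ring
    rw [expand, expandG]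
    have b1 := pair_bound hs0 hs1 (by linarith : (0:ℝ) ≤ 3*p)
    have b2 := pair_bound hs0 hs1 hp0.le
    have hbr : 8 + 12*p^2*((1-s) + (1-s)^2/2)^2 ≤
        (s ^ (-(3*p)) + s ^ (3*p)) + 3*(s ^ (-p) + s ^ p) := by nlinarith [b1, b2]
    exact mul_le_mul_of_nonneg_left hbr hA.le
  have hr1 : (-1:ℝ) < 3*p := by linarith
  have hr2 : (-1:ℝ) < 3*p+2 := by linarith
  have hr3 : (-1:ℝ) < 3*p+3 := by linarith
  have hr4 : (-1:ℝ) < 3*p+4 := by linarith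
  have i1 : IntegrableOn (fun s : ℝ => 8*(1-s)^(3*p)) (Set.Ioo (0:ℝ) 1) :=
    (rpow_Ioo_integrableOn hr1).const_mul 8
  have i2 : IntegrableOn (fun s : ℝ => 12*p^2*(1-s)^(3*p+2)) (Set.Ioo (0:ℝ) 1) :=
    (rpow_Ioo_integrableOn hr2).const_mul _
  have i3 : IntegrableOn (fun s : ℝ => 12*p^2*(1-s)^(3*p+3)) (Set.Ioo (0:ℝ) 1) :=
    (rpow_Ioo_integrableOn hr3).const_mul _
  have i4 : IntegrableOn (fun s : ℝ => 3*p^2*(1-s)^(3*p+4)) (Set.Ioo (0:ℝ) 1) :=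
    (rpow_Ioo_integrableOn hr4).const_mul _
  have hGint : IntegrableOn G (Set.Ioo (0:ℝ) 1) := ((i1.add i2).add i3).add i4
  have hFint : IntegrableOn F (Set.Ioo (0:ℝ) 1) := by
    have hmaj : IntegrableOn (fun s : ℝ => 8 * s ^ (-(3*p))) (Set.Ioo (0:ℝ) 1) := by
      have : IntegrableOn (fun s : ℝ => s ^ (-(3*p))) (Set.Ioo (0:ℝ) 1) :=
        (intervalIntegrable_iff_integrableOn_Ioo_of_le (by norm_num)).mp
          (intervalIntegral.intervalIntegrable_rpow' (by linarith))
      exact this.const_mul 8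
    apply Integrable.mono' hmaj
    · apply Measurable.aestronglyMeasurable
      have h1 : Measurable (fun s : ℝ => s ^ (-(3*p))) := by fun_prop
      have h2 : Measurable (fun s : ℝ => (1 - s) ^ (3*p)) := by fun_prop
      have h3 : Measurable (fun s : ℝ => (1 + s ^ (2*p)) ^ 3) := by fun_prop
      exact (h1.mul h2).mul h3
    · rw [MeasureTheory.ae_restrict_iff' measurableSet_Ioo]
      filter_upwards with s
      rintro ⟨hs0, hs1⟩
      have h1 : (1-s) ^ (3*p) ≤ 1 :=
        Real.rpow_le_one (by linarith) (by linarith) (by linarith)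
      have h2 : s ^ (2*p) ≤ 1 := Real.rpow_le_one hs0.le hs1.le (by linarith)
      have h3 : (0:ℝ) ≤ s ^ (-(3*p)) := Real.rpow_nonneg hs0.le _
      have h4 : (0:ℝ) ≤ (1-s) ^ (3*p) := Real.rpow_nonneg (by linarith) _
      have h5 : (0:ℝ) ≤ s ^ (2*p) := Real.rpow_nonneg hs0.le _
      have hFnn : 0 ≤ F s := by
        rw [hF]; dsimp only; positivity
      rw [Real.norm_of_nonneg hFnn, hF]; dsimp only
      have h8 : (1 + s ^ (2*p))^3 ≤ 8 := by
        have := pow_le_pow_left₀ (by linarith : (0:ℝ) ≤ 1 + s ^ (2*p))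
          (by linarith : 1 + s ^ (2*p) ≤ 2) 3
        norm_num at this
        linarith
      calc s ^ (-(3*p)) * (1 - s) ^ (3*p) * (1 + s ^ (2*p)) ^ 3
          ≤ s ^ (-(3*p)) * 1 * 8 := by
            apply mul_le_mul (mul_le_mul_of_nonneg_left h1 h3) h8 (by positivity)
              (by simpa using h3)
        _ = 8 * s ^ (-(3*p)) := by ring
  have hmono : ∫ s in Set.Ioo (0:ℝ) 1, G s ≤ ∫ s in Set.Ioo (0:ℝ) 1, F s :=
    setIntegral_mono_on hGint hFint measurableSet_Ioo hpt
  have hGval : ∫ s in Set.Ioo (0:ℝ) 1, G s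
      = 8/(3*p+1) + 12*p^2/(3*p+3) + 12*p^2/(3*p+4) + 3*p^2/(3*p+5) := by
    have i12 : IntegrableOn (fun s : ℝ => 8*(1-s)^(3*p) + 12*p^2*(1-s)^(3*p+2))
        (Set.Ioo (0:ℝ) 1) := i1.add i2
    have i123 : IntegrableOn (fun s : ℝ => 8*(1-s)^(3*p) + 12*p^2*(1-s)^(3*p+2)
        + 12*p^2*(1-s)^(3*p+3)) (Set.Ioo (0:ℝ) 1) := i12.add i3
    simp only [hG]
    rw [MeasureTheory.integral_add i123 i4,
      MeasureTheory.integral_add i12 i3,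
      MeasureTheory.integral_add i1 i2]
    rw [MeasureTheory.integral_const_mul, MeasureTheory.integral_const_mul,
      MeasureTheory.integral_const_mul, MeasureTheory.integral_const_mul]
    rw [rpow_Ioo_integral hr1, rpow_Ioo_integral hr2, rpow_Ioo_integral hr3,
      rpow_Ioo_integral hr4]
    have e1 : 3*p+2+1 = 3*p+3 := by ring
    have e2 : 3*p+3+1 = 3*p+4 := by ring
    have e3 : 3*p+4+1 = 3*p+5 := by ring
    rw [e1, e2, e3]
    ring
  have hQ1 : (0:ℝ) < 3*p+1 := by linarith
  have hQ3 : (0:ℝ) < 3*p+3 := by linarith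
  have hQ4 : (0:ℝ) < 3*p+4 := by linarith
  have hQ5 : (0:ℝ) < 3*p+5 := by linarith
  have hD : (0:ℝ) < (p+1) * (2*p+1) * (3*p+1) * (4*p+1) * (5*p+1) * (6*p+1) := by
    have : (0:ℝ) < p+1 := by linarith
    have : (0:ℝ) < 2*p+1 := by linarith
    have : (0:ℝ) < 4*p+1 := by linarith
    have : (0:ℝ) < 5*p+1 := by linarith
    have : (0:ℝ) < 6*p+1 := by linarith
    positivity
  have harith : 1 / (3*p + 1) + 9 * p^3 * (38*p^2 + 21*p + 3) /
        ((p+1) * (2*p+1) * (3*p+1) * (4*p+1) * (5*p+1) * (6*p+1))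
      ≤ (1/8) * (8/(3*p+1) + 12*p^2/(3*p+3) + 12*p^2/(3*p+4) + 3*p^2/(3*p+5)) := by
    rw [← sub_nonneg]
    have key : (1/8) * (8/(3*p+1) + 12*p^2/(3*p+3) + 12*p^2/(3*p+4) + 3*p^2/(3*p+5))
        - (1 / (3*p + 1) + 9 * p^3 * (38*p^2 + 21*p + 3) /
          ((p+1) * (2*p+1) * (3*p+1) * (4*p+1) * (5*p+1) * (6*p+1)))
        = p^2 * (228 - (2709/2)*p - 13479*p^2 + 28854*p^3 + 362145*p^4
            + (1742877/2)*p^5 + 919890*p^6 + 457326*p^7 + 87480*p^8)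
          / (4 * (3*p+3) * (3*p+4) * (3*p+5) *
            ((p+1) * (2*p+1) * (3*p+1) * (4*p+1) * (5*p+1) * (6*p+1))) := by
      field_simp
      ring
    rw [key]
    apply div_nonneg
    · exact mul_nonneg (sq_nonneg p) (finalpoly p hp0 hp3)
    · positivity
  calc 1 / (3*p + 1) + 9 * p^3 * (38*p^2 + 21*p + 3) /
        ((p+1) * (2*p+1) * (3*p+1) * (4*p+1) * (5*p+1) * (6*p+1))
      ≤ (1/8) * (8/(3*p+1) + 12*p^2/(3*p+3) + 12*p^2/(3*p+4) + 3*p^2/(3*p+5)) := harith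
    _ = (1/8) * ∫ s in Set.Ioo (0:ℝ) 1, G s := by rw [hGval]
    _ ≤ (1/8) * ∫ s in Set.Ioo (0:ℝ) 1, F s := by linarith [hmono]
end

section
/- Let H ∈ (1/2,1) and t ∈ ℝ. For s > max(0, −t) and v ∈ ℝ define g_s(v) = z_H(t+s, v+s) − z_H(s, v+s). Then there exist constants S > max(0,−t) and C > 0 such that for all s > S: ∫_{−∞}^t ( g_s(v) − f_H(t,v) )^2 dv ≤ C·s^{2H−2}. -/
open MeasureTheory Set intervalIntegral

lemma II_rpow_shift {r : ℝ} (hr : -1 < r) (v A B : ℝ) :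
    IntervalIntegrable (fun u => (u - v) ^ r) volume A B := by
  have := (intervalIntegral.intervalIntegrable_rpow' (a := A - v) (b := B - v) hr).comp_sub_right v
  simpa using this

lemma cont_rpow_shift {a : ℝ} (ha : 0 ≤ a) (s : ℝ) : Continuous fun u : ℝ => (u + s) ^ a :=
  (Real.continuous_rpow_const ha).comp (continuous_id.add continuous_const)

lemma II_ker {H : ℝ} (h1 : 1/2 < H) (s v A B : ℝ) :
    IntervalIntegrable (fun u => (u + s) ^ (H - 1/2) * (u - v) ^ (H - 3/2)) volume A B :=
  (II_rpow_shift (by linarith) v A B).continuousOn_mul ((cont_rpow_shift (by linarith) s).continuousOn)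

lemma II_ker0 {H : ℝ} (h1 : 1/2 < H) (x A B : ℝ) :
    IntervalIntegrable (fun w => w ^ (H - 1/2) * (w - x) ^ (H - 3/2)) volume A B :=
  (II_rpow_shift (by linarith) x A B).continuousOn_mul
    ((Real.continuous_rpow_const (by linarith)).continuousOn)

lemma f_eq {H t v : ℝ} (h1 : 1/2 < H) (h2 : H < 1) (hvt : v < t) :
    f_H H t v = (H - 1/2) * C_H H * ∫ u in (max v 0)..t, (u - v) ^ (H - 3/2) := by
  have hI : (∫ u in (max v 0)..t, (u - v) ^ (H - 3/2))
      = ∫ y in (max v 0 - v)..(t - v), y ^ (H - 3/2) :=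
    intervalIntegral.integral_comp_sub_right (fun y => y ^ (H - 3/2)) v
  rw [hI, integral_rpow (Or.inl (by linarith))]
  have e3 : H - 3/2 + 1 = H - 1/2 := by ring
  rw [e3]
  have e1 : max (t - v) 0 = t - v := max_eq_left (by linarith)
  have e2 : max (-v) 0 = max v 0 - v := by
    rcases le_total v 0 with h | h
    · rw [max_eq_left (neg_nonneg.mpr h), max_eq_right h, zero_sub]
    · rw [max_eq_right (neg_nonpos.mpr h), max_eq_left h, sub_self]
  have hne : H - 1/2 ≠ 0 := by linarith
  rw [f_H, e1, e2, mul_comm (H - 1/2) (C_H H), mul_assoc, mul_div_assoc',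
    mul_div_cancel_left₀ _ hne]

lemma zdiff {H t s v : ℝ} (h1 : 1/2 < H) (hs0 : 0 < s) (hts : 0 < t + s)
    (hv1 : -s < v) (hvt : v < t) :
    z_H H (t+s) (v+s) - z_H H s (v+s)
      = (H - 1/2) * c_H H * (v+s) ^ ((1:ℝ)/2 - H) *
          ∫ u in (max v 0)..t, (u + s) ^ (H - 1/2) * (u - v) ^ (H - 3/2) := by
  have hx : 0 < v + s := by linarith
  have hxts : v + s < t + s := by linarith
  have hcomp : ∀ A B : ℝ, (∫ w in (A + s)..(B + s), w ^ (H - 1/2) * (w - (v+s)) ^ (H - 3/2))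
      = ∫ u in A..B, (u + s) ^ (H - 1/2) * (u - v) ^ (H - 3/2) := by
    intro A B
    rw [← intervalIntegral.integral_comp_add_right
      (fun w => w ^ (H - 1/2) * (w - (v+s)) ^ (H - 3/2)) s]
    apply intervalIntegral.integral_congr
    intro u _
    have e : u + s - (v + s) = u - v := by ring
    simp only [e]
  have hz1 : z_H H (t+s) (v+s)
      = (H - 1/2) * c_H H * (v+s) ^ ((1:ℝ)/2 - H) *
          ∫ w in (v+s)..(t+s), w ^ (H - 1/2) * (w - (v+s)) ^ (H - 3/2) := by
    rw [z_H, if_pos ⟨hx, hxts⟩, intervalIntegral.integral_of_le hxts.le,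
      integral_Ioc_eq_integral_Ioo]
  rcases lt_or_ge v 0 with hv0 | hv0
  · have hxs : v + s < s := by linarith
    have hz2 : z_H H s (v+s)
        = (H - 1/2) * c_H H * (v+s) ^ ((1:ℝ)/2 - H) *
            ∫ w in (v+s)..s, w ^ (H - 1/2) * (w - (v+s)) ^ (H - 3/2) := by
      rw [z_H, if_pos ⟨hx, hxs⟩, intervalIntegral.integral_of_le hxs.le,
        integral_Ioc_eq_integral_Ioo]
    have hadd := intervalIntegral.integral_add_adjacent_intervals
      (II_ker0 h1 (v+s) (v+s) s) (II_ker0 h1 (v+s) s (t+s))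
    have hms : max v 0 = 0 := max_eq_right hv0.le
    have hc := hcomp 0 t
    rw [zero_add] at hc
    rw [hz1, hz2, hms, ← hc]
    linear_combination ((H - 1/2) * c_H H * (v+s) ^ ((1:ℝ)/2 - H)) * hadd.symm
  · have hz2 : z_H H s (v+s) = 0 := by
      rw [z_H, if_neg]
      rintro ⟨-, hlt⟩
      linarith
    have hms : max v 0 = v := max_eq_left hv0
    rw [hz1, hz2, hms, sub_zero, ← hcomp v t]
lemma cH_eq {H : ℝ} (h1 : 1/2 < H) (h2 : H < 1) : c_H H = C_H H := by
  have hpi := Real.pi_pos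
  have hΓ : 0 < Real.Gamma (H + 1/2) := Real.Gamma_pos_of_pos (by linarith)
  have hΓ2H : 0 < Real.Gamma (2*H) := Real.Gamma_pos_of_pos (by linarith)
  have hΓ22 : 0 < Real.Gamma (2 - 2*H) := Real.Gamma_pos_of_pos (by linarith)
  have hsin : 0 < Real.sin (Real.pi * H) := by
    apply Real.sin_pos_of_pos_of_lt_pi <;> nlinarith
  have hcos : Real.cos (Real.pi * H) < 0 := by
    apply Real.cos_neg_of_pi_div_two_lt_of_lt <;> nlinarith
  have hrefl1 : Real.Gamma (H + 1/2) * Real.Gamma (1/2 - H) = Real.pi / Real.cos (Real.pi * H) := by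
    have h := Real.Gamma_mul_Gamma_one_sub (H + 1/2)
    have e1 : (1 : ℝ) - (H + 1/2) = 1/2 - H := by ring
    have e2 : Real.sin (Real.pi * (H + 1/2)) = Real.cos (Real.pi * H) := by
      have : Real.pi * (H + 1/2) = Real.pi * H + Real.pi / 2 := by ring
      rw [this, Real.sin_add_pi_div_two]
    rw [e1, e2] at h
    exact h
  have hrefl2 : Real.Gamma (2*H) * Real.Gamma (1 - 2*H)
      = Real.pi / (2 * Real.sin (Real.pi * H) * Real.cos (Real.pi * H)) := by
    have h := Real.Gamma_mul_Gamma_one_sub (2*H)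
    have e2 : Real.sin (Real.pi * (2*H)) = 2 * Real.sin (Real.pi * H) * Real.cos (Real.pi * H) := by
      have : Real.pi * (2*H) = 2 * (Real.pi * H) := by ring
      rw [this, Real.sin_two_mul]
    rw [e2] at h
    exact h
  have h32 : Real.Gamma (3/2 - H) = (1/2 - H) * Real.Gamma (1/2 - H) := by
    have h := Real.Gamma_add_one (s := 1/2 - H) (sub_ne_zero.mpr (ne_of_lt h1))
    have e : (1:ℝ)/2 - H + 1 = 3/2 - H := by ring
    rw [e] at h; exact h
  have h22 : Real.Gamma (2 - 2*H) = (1 - 2*H) * Real.Gamma (1 - 2*H) := by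
    have h := Real.Gamma_add_one (s := 1 - 2*H) (sub_ne_zero.mpr (ne_of_lt (by linarith)))
    have e : (1:ℝ) - 2*H + 1 = 2 - 2*H := by ring
    rw [e] at h; exact h
  have key : Real.Gamma (H + 1/2) * Real.Gamma (3/2 - H)
      = Real.sin (Real.pi * H) * Real.Gamma (2*H) * Real.Gamma (2 - 2*H) := by
    rw [h32, h22]
    have e1 : Real.Gamma (1/2 - H) = Real.pi / Real.cos (Real.pi * H) / Real.Gamma (H + 1/2) :=
      (eq_div_iff hΓ.ne').mpr (by rw [mul_comm]; exact hrefl1)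
    have e2 : Real.Gamma (1 - 2*H) = Real.pi / (2 * Real.sin (Real.pi * H) * Real.cos (Real.pi * H)) / Real.Gamma (2*H) :=
      (eq_div_iff hΓ2H.ne').mpr (by rw [mul_comm]; exact hrefl2)
    rw [e1, e2]
    field_simp [hΓ.ne', hΓ2H.ne', hsin.ne', (ne_of_lt hcos)]
    have hs' : Real.sin (H * Real.pi) ≠ 0 := by rw [mul_comm]; exact hsin.ne'
    ring_nf
    simp only [mul_inv_cancel_right₀ hs']
  have hX : 2 * H * Real.Gamma (H + 1/2) * Real.Gamma (3/2 - H) / Real.Gamma (2 - 2*H)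
      = 2 * H * Real.sin (Real.pi * H) * Real.Gamma (2*H) := by
    rw [div_eq_iff hΓ22.ne']
    linear_combination 2 * H * key
  rw [c_H, C_H, hX, inv_mul_eq_div]

lemma C_H_pos {H : ℝ} (h1 : 1/2 < H) (h2 : H < 1) : 0 < C_H H := by
  have hΓ : 0 < Real.Gamma (H + 1/2) := Real.Gamma_pos_of_pos (by linarith)
  have hΓ2H : 0 < Real.Gamma (2*H) := Real.Gamma_pos_of_pos (by linarith)
  have hsin : 0 < Real.sin (Real.pi * H) := by
    have hpi := Real.pi_pos
    apply Real.sin_pos_of_pos_of_lt_pi <;> nlinarith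
  exact div_pos (Real.sqrt_pos.mpr (mul_pos (mul_pos (by linarith : (0:ℝ) < 2*H) hsin) hΓ2H)) hΓ

lemma err_eq {H t s v : ℝ} (h1 : 1/2 < H) (h2 : H < 1) (hs0 : 0 < s) (hts : 0 < t + s)
    (hv1 : -s < v) (hvt : v < t) :
    z_H H (t+s) (v+s) - z_H H s (v+s) - f_H H t v
      = (H - 1/2) * C_H H *
          ∫ u in (max v 0)..t,
            ((v+s) ^ ((1:ℝ)/2 - H) * (u+s) ^ (H - 1/2) - 1) * (u - v) ^ (H - 3/2) := by
  rw [zdiff h1 hs0 hts hv1 hvt, f_eq h1 h2 hvt, cH_eq h1 h2]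
  have hsplit : (∫ u in (max v 0)..t,
        ((v+s) ^ ((1:ℝ)/2 - H) * (u+s) ^ (H - 1/2) - 1) * (u - v) ^ (H - 3/2))
      = (∫ u in (max v 0)..t,
          (v+s) ^ ((1:ℝ)/2 - H) * ((u+s) ^ (H - 1/2) * (u - v) ^ (H - 3/2)))
        - ∫ u in (max v 0)..t, (u - v) ^ (H - 3/2) := by
    rw [← intervalIntegral.integral_sub ((II_ker h1 s v _ _).const_mul _)
      (II_rpow_shift (by linarith) v _ _)]
    apply intervalIntegral.integral_congr
    intro u _
    ring
  rw [hsplit, intervalIntegral.integral_const_mul]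
  ring

lemma one_le_ratio {p x y : ℝ} (hp0 : 0 ≤ p) (hx : 0 < x) (hxy : x ≤ y) :
    1 ≤ x ^ (-p) * y ^ p := by
  have hxp : 0 < x ^ p := Real.rpow_pos_of_pos hx p
  have hle : x ^ p ≤ y ^ p := Real.rpow_le_rpow hx.le hxy hp0
  rw [Real.rpow_neg hx.le]
  calc (1:ℝ) = (x ^ p)⁻¹ * x ^ p := (inv_mul_cancel₀ hxp.ne').symm
    _ ≤ (x ^ p)⁻¹ * y ^ p := by
        exact mul_le_mul_of_nonneg_left hle (inv_nonneg.mpr hxp.le)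

lemma ratio_le {p x y : ℝ} (hp0 : 0 ≤ p) (hp1 : p ≤ 1) (hx : 0 < x) (hxy : x ≤ y) :
    x ^ (-p) * y ^ p - 1 ≤ p * (y - x) / x := by
  have hy : 0 < y := lt_of_lt_of_le hx hxy
  have h0 : (0:ℝ) ≤ (y - x)/x := div_nonneg (by linarith) hx.le
  have hB : (1 + (y-x)/x) ^ p ≤ 1 + p * ((y-x)/x) :=
    rpow_one_add_le_one_add_mul_self (by linarith) hp0 hp1
  have hyx : x * (1 + (y-x)/x) = y := by field_simp; ring
  have hr : y ^ p ≤ x ^ p * (1 + p * ((y-x)/x)) := by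
    calc y ^ p = (x * (1 + (y-x)/x)) ^ p := by rw [hyx]
      _ = x ^ p * (1 + (y-x)/x) ^ p := Real.mul_rpow hx.le (by linarith)
      _ ≤ x ^ p * (1 + p * ((y-x)/x)) :=
          mul_le_mul_of_nonneg_left hB (Real.rpow_nonneg hx.le _)
  have hxp : 0 < x ^ p := Real.rpow_pos_of_pos hx p
  rw [Real.rpow_neg hx.le, sub_le_iff_le_add]
  rw [inv_mul_le_iff₀ hxp]
  calc y ^ p ≤ x ^ p * (1 + p * ((y-x)/x)) := hr
    _ = x ^ p * (p * (y - x) / x + 1) := by ring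
  
lemma mem_facts {v t u : ℝ} (hvt : v < t) (hu : u ∈ Set.uIoc (max v 0) t) :
    v < u ∧ -|t| ≤ u ∧ u ≤ |t| := by
  rw [Set.uIoc] at hu
  obtain ⟨hl, hr⟩ := hu
  have h1 : min (max v 0) t ≥ v := le_min (le_max_left _ _) hvt.le
  have h2 : min (max v 0) t ≥ -|t| := le_min (le_max_of_le_right (neg_nonpos.mpr (abs_nonneg t))) (neg_abs_le t)
  have h3 : max (max v 0) t ≤ |t| := by
    apply max_le _ (le_abs_self t)
    apply max_le _ (abs_nonneg t)
    exact le_trans hvt.le (le_abs_self t)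
  exact ⟨lt_of_le_of_lt h1 hl, le_trans h2 hl.le, le_trans hr h3⟩

lemma rpow_base_div {s c b : ℝ} (hs : 0 ≤ s) (hc : 0 < c) :
    (s / c) ^ b = s ^ b * (c ^ b)⁻¹ := by
  rw [div_eq_mul_inv, Real.mul_rpow hs (inv_nonneg.mpr hc.le), Real.inv_rpow hc.le]

lemma helper1 {c b : ℝ} (hc : 1 ≤ c) (hb : -1 ≤ b) (hb0 : b ≤ 0) : (c ^ b)⁻¹ ≤ c := by
  have h : (c ^ b)⁻¹ = c ^ (-b) := by rw [Real.rpow_neg (by linarith : (0:ℝ) ≤ c)]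
  rw [h]
  calc c ^ (-b) ≤ c ^ (1:ℝ) := Real.rpow_le_rpow_of_exponent_le hc (by linarith)
    _ = c := Real.rpow_one c

lemma tm_le {v t : ℝ} (hvt : v < t) : |t - max v 0| ≤ |t| := by
  rcases le_total v 0 with h | h
  · rw [max_eq_right h, sub_zero]
  · rw [max_eq_left h]
    rw [abs_of_nonneg (by linarith), abs_of_nonneg (by linarith : (0:ℝ) ≤ t)]
    linarith

lemma final_step {p c B T : ℝ} (hp0 : 0 ≤ p) (hp1 : p ≤ 1) (hc : 0 ≤ c) (hB : 0 ≤ B)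
    (hT : 0 ≤ T) : p * c * (B * T) ≤ c * (T + 1) * B := by
  nlinarith [mul_nonneg hc hB, mul_nonneg (mul_nonneg hc hB) hT,
    mul_le_mul_of_nonneg_right hp1 (mul_nonneg (mul_nonneg hc hB) hT)]

lemma bound_R1 {H t s v : ℝ} (h1 : 1/2 < H) (h2 : H < 1) (hT : 4*|t| + 4 < s)
    (hv : v ≤ -s) (hvt : v < t) :
    |z_H H (t+s) (v+s) - z_H H s (v+s) - f_H H t v|
      ≤ C_H H * (|t| + 1) * (2 * (-v) ^ (H - 3/2)) := by
  have habs := abs_nonneg t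
  have hs0 : 0 < s := by linarith
  have hnv : (0:ℝ) < -v := by linarith
  have hC := (C_H_pos h1 h2).le
  have hz1 : z_H H (t+s) (v+s) = 0 := by rw [z_H, if_neg]; rintro ⟨h, -⟩; linarith
  have hz2 : z_H H s (v+s) = 0 := by rw [z_H, if_neg]; rintro ⟨h, -⟩; linarith
  rw [hz1, hz2, f_eq h1 h2 hvt,
    show (0:ℝ) - 0 - ((H - 1/2) * C_H H * ∫ u in (max v 0)..t, (u - v) ^ (H - 3/2))
      = -((H - 1/2) * C_H H * ∫ u in (max v 0)..t, (u - v) ^ (H - 3/2)) from by ring,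
    abs_neg, abs_mul,
    abs_of_nonneg (mul_nonneg (by linarith : (0:ℝ) ≤ H - 1/2) hC)]
  have key : |∫ u in (max v 0)..t, (u - v) ^ (H - 3/2)|
      ≤ (2 * (-v) ^ (H - 3/2)) * |t - max v 0| := by
    rw [← Real.norm_eq_abs]
    apply intervalIntegral.norm_integral_le_of_norm_le_const
    intro u hu
    obtain ⟨hvu, hul, huu⟩ := mem_facts hvt hu
    have hle : -v/2 ≤ u - v := by linarith
    have hhalf : (0:ℝ) < -v/2 := by linarith
    rw [Real.norm_eq_abs, abs_of_nonneg (Real.rpow_nonneg (by linarith) _)]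
    calc (u - v) ^ (H - 3/2) ≤ (-v/2) ^ (H - 3/2) :=
          Real.rpow_le_rpow_of_nonpos hhalf hle (by linarith)
      _ = (-v) ^ (H - 3/2) * ((2:ℝ) ^ (H - 3/2))⁻¹ := rpow_base_div hnv.le two_pos
      _ ≤ (-v) ^ (H - 3/2) * 2 := by
          apply mul_le_mul_of_nonneg_left (helper1 one_le_two (by linarith) (by linarith))
            (Real.rpow_nonneg hnv.le _)
      _ = 2 * (-v) ^ (H - 3/2) := by ring
  calc (H - 1/2) * C_H H * |∫ u in (max v 0)..t, (u - v) ^ (H - 3/2)|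
      ≤ (H - 1/2) * C_H H * ((2 * (-v) ^ (H - 3/2)) * |t - max v 0|) := by
        apply mul_le_mul_of_nonneg_left key (mul_nonneg (by linarith) hC)
    _ ≤ (H - 1/2) * C_H H * ((2 * (-v) ^ (H - 3/2)) * |t|) := by
        apply mul_le_mul_of_nonneg_left (mul_le_mul_of_nonneg_left (tm_le hvt)
          (by positivity)) (mul_nonneg (by linarith) hC)
    _ ≤ C_H H * (|t| + 1) * (2 * (-v) ^ (H - 3/2)) :=
        final_step (by linarith) (by linarith) hC (by positivity) habs

lemma bound_R2 {H t s v : ℝ} (h1 : 1/2 < H) (h2 : H < 1) (hT : 4*|t| + 4 < s)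
    (hv1 : -s < v) (hv2 : v < -s/2) :
    |z_H H (t+s) (v+s) - z_H H s (v+s) - f_H H t v|
      ≤ C_H H * (|t| + 1) * (8 * ((v+s) ^ (-(H - 1/2)) * s ^ (2*H - 2))) := by
  have habs := abs_nonneg t
  have hs0 : 0 < s := by linarith
  have hvt : v < t := by
    have := neg_abs_le t; linarith
  have hts : 0 < t + s := by have := neg_abs_le t; linarith
  have hx : 0 < v + s := by linarith
  have hC := (C_H_pos h1 h2).le
  have hp0 : (0:ℝ) ≤ H - 1/2 := by linarith
  have eneg : ((1:ℝ)/2 - H) = -(H - 1/2) := by ring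
  rw [err_eq h1 h2 hs0 hts hv1 hvt, abs_mul,
    abs_of_nonneg (mul_nonneg (by linarith : (0:ℝ) ≤ H - 1/2) hC), eneg]
  set B : ℝ := 8 * ((v+s) ^ (-(H - 1/2)) * s ^ (2*H - 2)) with hB
  have hBnn : 0 ≤ B := by positivity
  have key : |∫ u in (max v 0)..t,
        ((v+s) ^ (-(H - 1/2)) * (u+s) ^ (H - 1/2) - 1) * (u - v) ^ (H - 3/2)|
      ≤ B * |t - max v 0| := by
    rw [← Real.norm_eq_abs]
    apply intervalIntegral.norm_integral_le_of_norm_le_const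
    intro u hu
    obtain ⟨hvu, hul, huu⟩ := mem_facts hvt hu
    have hy : 0 < u + s := by linarith
    have hxy : v + s ≤ u + s := by linarith
    have hf1nn : 0 ≤ (v+s) ^ (-(H - 1/2)) * (u+s) ^ (H - 1/2) - 1 := by
      linarith [one_le_ratio hp0 hx hxy]
    have hf2nn : (0:ℝ) ≤ (u - v) ^ (H - 3/2) := Real.rpow_nonneg (by linarith) _
    rw [Real.norm_eq_abs, abs_of_nonneg (mul_nonneg hf1nn hf2nn)]
    have hxinv : (0:ℝ) ≤ (v+s) ^ (-(H - 1/2)) := Real.rpow_nonneg hx.le _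
    have hf1 : (v+s) ^ (-(H - 1/2)) * (u+s) ^ (H - 1/2)
        ≤ 2 * ((v+s) ^ (-(H - 1/2)) * s ^ (H - 1/2)) := by
      calc (v+s) ^ (-(H - 1/2)) * (u+s) ^ (H - 1/2)
          ≤ (v+s) ^ (-(H - 1/2)) * (2*s) ^ (H - 1/2) := by
            apply mul_le_mul_of_nonneg_left
              (Real.rpow_le_rpow hy.le (by linarith) hp0) hxinv
        _ = (v+s) ^ (-(H - 1/2)) * ((2:ℝ) ^ (H - 1/2) * s ^ (H - 1/2)) := by
            rw [Real.mul_rpow (by norm_num) hs0.le]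
        _ ≤ (v+s) ^ (-(H - 1/2)) * (2 * s ^ (H - 1/2)) := by
            apply mul_le_mul_of_nonneg_left _ hxinv
            apply mul_le_mul_of_nonneg_right _ (Real.rpow_nonneg hs0.le _)
            calc (2:ℝ) ^ (H - 1/2) ≤ (2:ℝ) ^ (1:ℝ) :=
                  Real.rpow_le_rpow_of_exponent_le one_le_two (by linarith)
              _ = 2 := Real.rpow_one 2
        _ = 2 * ((v+s) ^ (-(H - 1/2)) * s ^ (H - 1/2)) := by ring
    have hf2 : (u - v) ^ (H - 3/2) ≤ 4 * s ^ (H - 3/2) := by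
      have hq : (0:ℝ) < s/4 := by linarith
      have hle : s/4 ≤ u - v := by linarith
      calc (u - v) ^ (H - 3/2) ≤ (s/4) ^ (H - 3/2) :=
            Real.rpow_le_rpow_of_nonpos hq hle (by linarith)
        _ = s ^ (H - 3/2) * ((4:ℝ) ^ (H - 3/2))⁻¹ := rpow_base_div hs0.le (by norm_num)
        _ ≤ s ^ (H - 3/2) * 4 := by
            apply mul_le_mul_of_nonneg_left
              (helper1 (by norm_num) (by linarith) (by linarith)) (Real.rpow_nonneg hs0.le _)
        _ = 4 * s ^ (H - 3/2) := by ring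
    calc ((v+s) ^ (-(H - 1/2)) * (u+s) ^ (H - 1/2) - 1) * (u - v) ^ (H - 3/2)
        ≤ ((v+s) ^ (-(H - 1/2)) * (u+s) ^ (H - 1/2)) * (u - v) ^ (H - 3/2) := by
          apply mul_le_mul_of_nonneg_right (by linarith) hf2nn
      _ ≤ (2 * ((v+s) ^ (-(H - 1/2)) * s ^ (H - 1/2))) * (4 * s ^ (H - 3/2)) := by
          apply mul_le_mul hf1 hf2 hf2nn (by positivity)
      _ = B := by
          have hs2 : s ^ (H - 1/2) * s ^ (H - 3/2) = s ^ (2*H - 2) := by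
            rw [← Real.rpow_add hs0]; congr 1; ring
          rw [hB]
          linear_combination 8 * (v+s) ^ (-(H - 1/2)) * hs2
  calc (H - 1/2) * C_H H * |∫ u in (max v 0)..t,
        ((v+s) ^ (-(H - 1/2)) * (u+s) ^ (H - 1/2) - 1) * (u - v) ^ (H - 3/2)|
      ≤ (H - 1/2) * C_H H * (B * |t - max v 0|) := by
        apply mul_le_mul_of_nonneg_left key (mul_nonneg hp0 hC)
    _ ≤ (H - 1/2) * C_H H * (B * |t|) := by
        apply mul_le_mul_of_nonneg_left (mul_le_mul_of_nonneg_left (tm_le hvt) hBnn)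
          (mul_nonneg hp0 hC)
    _ ≤ C_H H * (|t| + 1) * B := final_step hp0 (by linarith) hC hBnn habs

lemma bound_R3 {H t s v : ℝ} (h1 : 1/2 < H) (h2 : H < 1) (hT : 4*|t| + 4 < s)
    (hv1 : -s/2 ≤ v) (hvt : v < t) :
    |z_H H (t+s) (v+s) - z_H H s (v+s) - f_H H t v|
      ≤ C_H H * (|t| + 1) * (2 * s ^ (H - 3/2)) := by
  have habs := abs_nonneg t
  have hs0 : 0 < s := by linarith
  have hv1' : -s < v := by linarith
  have hts : 0 < t + s := by have := neg_abs_le t; linarith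
  have hx : 0 < v + s := by linarith
  have hC := (C_H_pos h1 h2).le
  have hp0 : (0:ℝ) ≤ H - 1/2 := by linarith
  have eneg : ((1:ℝ)/2 - H) = -(H - 1/2) := by ring
  rw [err_eq h1 h2 hs0 hts hv1' hvt, abs_mul,
    abs_of_nonneg (mul_nonneg hp0 hC), eneg]
  set B : ℝ := 2 * s ^ (H - 3/2) with hB
  have hBnn : 0 ≤ B := by positivity
  have key : |∫ u in (max v 0)..t,
        ((v+s) ^ (-(H - 1/2)) * (u+s) ^ (H - 1/2) - 1) * (u - v) ^ (H - 3/2)|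
      ≤ B * |t - max v 0| := by
    rw [← Real.norm_eq_abs]
    apply intervalIntegral.norm_integral_le_of_norm_le_const
    intro u hu
    obtain ⟨hvu, hul, huu⟩ := mem_facts hvt hu
    have hy : 0 < u + s := by linarith
    have hxy : v + s ≤ u + s := by linarith
    have huv : 0 < u - v := by linarith
    have hf1nn : 0 ≤ (v+s) ^ (-(H - 1/2)) * (u+s) ^ (H - 1/2) - 1 := by
      linarith [one_le_ratio hp0 hx hxy]
    have hf2nn : (0:ℝ) ≤ (u - v) ^ (H - 3/2) := Real.rpow_nonneg (by linarith) _
    rw [Real.norm_eq_abs, abs_of_nonneg (mul_nonneg hf1nn hf2nn)]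
    have hf1 : (v+s) ^ (-(H - 1/2)) * (u+s) ^ (H - 1/2) - 1
        ≤ (H - 1/2) * (u - v) / (s/2) := by
      calc (v+s) ^ (-(H - 1/2)) * (u+s) ^ (H - 1/2) - 1
          ≤ (H - 1/2) * ((u+s) - (v+s)) / (v+s) :=
            ratio_le hp0 (by linarith) hx hxy
        _ = (H - 1/2) * (u - v) / (v+s) := by ring_nf
        _ ≤ (H - 1/2) * (u - v) / (s/2) := by
            apply div_le_div_of_nonneg_left (by positivity) (by linarith) (by linarith)
    calc ((v+s) ^ (-(H - 1/2)) * (u+s) ^ (H - 1/2) - 1) * (u - v) ^ (H - 3/2)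
        ≤ ((H - 1/2) * (u - v) / (s/2)) * (u - v) ^ (H - 3/2) :=
          mul_le_mul_of_nonneg_right hf1 hf2nn
      _ = (H - 1/2) / (s/2) * ((u - v) ^ (1:ℝ) * (u - v) ^ (H - 3/2)) := by
          rw [Real.rpow_one]; ring
      _ = (H - 1/2) / (s/2) * (u - v) ^ (H - 1/2) := by
          rw [← Real.rpow_add huv]
          rw [show (1:ℝ) + (H - 3/2) = H - 1/2 from by ring]
      _ ≤ (H - 1/2) / (s/2) * s ^ (H - 1/2) := by
          apply mul_le_mul_of_nonneg_left
            (Real.rpow_le_rpow huv.le (by linarith) hp0) (by positivity)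
      _ ≤ B := by
          have hsp : s ^ (H - 3/2) = s ^ (H - 1/2) / s := by
            rw [show (H:ℝ) - 3/2 = H - 1/2 - 1 from by ring, Real.rpow_sub hs0, Real.rpow_one]
          rw [hB, hsp, div_mul_eq_mul_div, mul_div_assoc',
            div_le_div_iff₀ (by linarith : (0:ℝ) < s/2) hs0]
          nlinarith [mul_nonneg (Real.rpow_nonneg hs0.le (H - 1/2)) hs0.le,
            (by linarith : H - 1/2 ≤ 1)]
  calc (H - 1/2) * C_H H * |∫ u in (max v 0)..t,
        ((v+s) ^ (-(H - 1/2)) * (u+s) ^ (H - 1/2) - 1) * (u - v) ^ (H - 3/2)|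
      ≤ (H - 1/2) * C_H H * (B * |t - max v 0|) := by
        apply mul_le_mul_of_nonneg_left key (mul_nonneg hp0 hC)
    _ ≤ (H - 1/2) * C_H H * (B * |t|) := by
        apply mul_le_mul_of_nonneg_left (mul_le_mul_of_nonneg_left (tm_le hvt) hBnn)
          (mul_nonneg hp0 hC)
    _ ≤ C_H H * (|t| + 1) * B := final_step hp0 (by linarith) hC hBnn habs

lemma sq_le_of_abs_le {x b : ℝ} (h : |x| ≤ b) : x^2 ≤ b^2 :=
  sq_le_sq' (abs_le.mp h).1 (abs_le.mp h).2

lemma II_rpow_shift' {r : ℝ} (hr : -1 < r) (s A B : ℝ) :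
    IntervalIntegrable (fun u => (u + s) ^ r) volume A B := by
  have := (intervalIntegral.intervalIntegrable_rpow' (a := A + s) (b := B + s) hr).comp_add_right s
  simpa using this

lemma measurable_rpow_const (c : ℝ) : Measurable fun x : ℝ => x ^ c :=
  measurable_of_continuousOn_compl_singleton 0 (fun x hx =>
    (Real.continuousAt_rpow_const x c (Or.inl hx)).continuousWithinAt)

lemma pieceA {H t s : ℝ} (h1 : 1/2 < H) (h2 : H < 1) (hT : 4*|t| + 4 < s) :
    (∫⁻ v in Iic (-s),
        ENNReal.ofReal ((z_H H (t + s) (v + s) - z_H H s (v + s) - f_H H t v) ^ 2))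
      ≤ ENNReal.ofReal (4*(C_H H * (|t|+1))^2/(2-2*H) * s ^ (2*H-2)) := by
  have habs := abs_nonneg t
  have hs0 : 0 < s := by linarith
  set M := C_H H * (|t|+1) with hM
  have hMnn : 0 ≤ M := mul_nonneg (C_H_pos h1 h2).le (by linarith)
  have step1 : (∫⁻ v in Iic (-s),
        ENNReal.ofReal ((z_H H (t + s) (v + s) - z_H H s (v + s) - f_H H t v) ^ 2))
      ≤ ∫⁻ v in Iic (-s), ENNReal.ofReal (4*M^2 * (-v) ^ (2*H-3)) := by
    apply setLIntegral_mono
    · apply Measurable.ennreal_ofReal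
      exact measurable_const.mul ((measurable_rpow_const (2*H-3)).comp measurable_neg)
    · intro v hv
      have hv' : v ≤ -s := hv
      have hvt : v < t := by have := neg_abs_le t; linarith
      apply ENNReal.ofReal_le_ofReal
      calc (z_H H (t + s) (v + s) - z_H H s (v + s) - f_H H t v) ^ 2
          ≤ (M * (2 * (-v) ^ (H - 3/2)))^2 :=
            sq_le_of_abs_le (bound_R1 h1 h2 hT hv' hvt)
        _ = 4*M^2 * (-v) ^ (2*H-3) := by
            have hnv : (0:ℝ) < -v := by linarith
            have hsq2 : ((-v) ^ (H - 3/2)) ^ 2 = (-v) ^ (2*H-3) := by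
              rw [sq, ← Real.rpow_add hnv, show H - 3/2 + (H - 3/2) = 2*H-3 from by ring]
            rw [mul_pow, mul_pow, mul_pow, hsq2]
            ring
  have hIntIci : IntegrableOn (fun x : ℝ => x ^ (2*H-3)) (Ici s) :=
    (integrableOn_Ici_iff_integrableOn_Ioi).mpr (integrableOn_Ioi_rpow_of_lt (by linarith) hs0)
  have hemb : MeasurableEmbedding (fun x : ℝ => -x) :=
    (Homeomorph.neg ℝ).isClosedEmbedding.measurableEmbedding
  have hInt : IntegrableOn (fun v : ℝ => (-v) ^ (2*H-3)) (Iic (-s)) := by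
    have h0 : IntegrableOn (fun v : ℝ => (-v) ^ (2*H-3)) (Iic (-s))
        (Measure.map (fun x : ℝ => -x) volume) := by
      rw [hemb.integrableOn_map_iff]
      simpa [Function.comp_def, neg_preimage, neg_Iic, neg_neg] using hIntIci
    rwa [Measure.map_neg_eq_self] at h0
  have hval : (∫ v in Iic (-s), (-v) ^ (2*H-3)) = s^(2*H-2)/(2-2*H) := by
    rw [integral_comp_neg_Iic (-s) (fun x => x ^ (2*H-3)), neg_neg,
      integral_Ioi_rpow_of_lt (by linarith) hs0,
      show 2*H-3+1 = 2*H-2 from by ring,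
      div_eq_div_iff (by linarith : (2*H-2:ℝ) ≠ 0) (by linarith : (2-2*H:ℝ) ≠ 0)]
    ring
  have step2 : (∫⁻ v in Iic (-s), ENNReal.ofReal (4*M^2 * (-v) ^ (2*H-3)))
      = ENNReal.ofReal (4*M^2 * (s^(2*H-2)/(2-2*H))) := by
    rw [← MeasureTheory.ofReal_integral_eq_lintegral_ofReal (hInt.const_mul (4*M^2))]
    · rw [MeasureTheory.integral_const_mul, hval]
    · apply (ae_restrict_iff' measurableSet_Iic).mpr
      apply Filter.Eventually.of_forall
      intro v hv
      have hnv : (0:ℝ) ≤ -v := by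
        simp only [mem_Iic] at hv; linarith
      positivity
  refine step1.trans (le_of_eq ?_)
  rw [step2]
  congr 1
  rw [hM]
  ring

lemma pieceB {H t s : ℝ} (h1 : 1/2 < H) (h2 : H < 1) (hT : 4*|t| + 4 < s) :
    (∫⁻ v in Ioo (-s) (-s/2),
        ENNReal.ofReal ((z_H H (t + s) (v + s) - z_H H s (v + s) - f_H H t v) ^ 2))
      ≤ ENNReal.ofReal (64*(C_H H * (|t|+1))^2/(2-2*H) * s ^ (2*H-2)) := by
  have habs := abs_nonneg t
  have hs0 : 0 < s := by linarith
  set M := C_H H * (|t|+1) with hM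
  have hMnn : 0 ≤ M := mul_nonneg (C_H_pos h1 h2).le (by linarith)
  set E : ℝ := 64*M^2 * s^(4*H-4) with hE
  have hEnn : 0 ≤ E := by positivity
  have step1 : (∫⁻ v in Ioo (-s) (-s/2),
        ENNReal.ofReal ((z_H H (t + s) (v + s) - z_H H s (v + s) - f_H H t v) ^ 2))
      ≤ ∫⁻ v in Ioo (-s) (-s/2), ENNReal.ofReal (E * (v+s) ^ (1-2*H)) := by
    apply setLIntegral_mono
    · exact Measurable.ennreal_ofReal (measurable_const.mul
        ((measurable_rpow_const (1-2*H)).comp (measurable_id.add_const s)))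
    · intro v hv
      obtain ⟨hv1, hv2⟩ := hv
      have hx : 0 < v + s := by linarith
      apply ENNReal.ofReal_le_ofReal
      calc (z_H H (t + s) (v + s) - z_H H s (v + s) - f_H H t v) ^ 2
          ≤ (M * (8 * ((v+s) ^ (-(H - 1/2)) * s ^ (2*H - 2))))^2 :=
            sq_le_of_abs_le (bound_R2 h1 h2 hT hv1 hv2)
        _ = E * (v+s) ^ (1-2*H) := by
            have e1 : ((v+s) ^ (-(H - 1/2))) ^ 2 = (v+s) ^ (1-2*H) := by
              rw [sq, ← Real.rpow_add hx, show -(H - 1/2) + -(H - 1/2) = 1-2*H from by ring]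
            have e2 : (s ^ (2*H - 2)) ^ 2 = s ^ (4*H-4) := by
              rw [sq, ← Real.rpow_add hs0, show 2*H-2 + (2*H-2) = 4*H-4 from by ring]
            rw [mul_pow, mul_pow, mul_pow, mul_pow, e1, e2, hE]
            ring
  have hInt : IntegrableOn (fun v : ℝ => (v+s) ^ (1-2*H)) (Ioo (-s) (-s/2)) :=
    (intervalIntegrable_iff_integrableOn_Ioo_of_le (by linarith)).mp
      (II_rpow_shift' (by linarith) s (-s) (-s/2))
  have hval : (∫ v in Ioo (-s) (-s/2), (v+s) ^ (1-2*H)) = (s/2)^(2-2*H)/(2-2*H) := by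
    rw [← integral_Ioc_eq_integral_Ioo, ← intervalIntegral.integral_of_le (by linarith : -s ≤ -s/2)]
    rw [intervalIntegral.integral_comp_add_right (fun y : ℝ => y ^ (1-2*H)) s,
      show -s+s = (0:ℝ) from by ring, show -s/2+s = s/2 from by ring,
      integral_rpow (Or.inl (by linarith)),
      show 1-2*H+1 = 2-2*H from by ring,
      Real.zero_rpow (by linarith : (2-2*H:ℝ) ≠ 0)]
    rw [sub_zero]
  have step2 : (∫⁻ v in Ioo (-s) (-s/2), ENNReal.ofReal (E * (v+s) ^ (1-2*H)))
      = ENNReal.ofReal (E * ((s/2)^(2-2*H)/(2-2*H))) := by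
    rw [← MeasureTheory.ofReal_integral_eq_lintegral_ofReal (hInt.const_mul E)]
    · rw [MeasureTheory.integral_const_mul, hval]
    · apply (ae_restrict_iff' measurableSet_Ioo).mpr
      apply Filter.Eventually.of_forall
      intro v hv
      have hx : (0:ℝ) ≤ v + s := by
        obtain ⟨hv1, -⟩ := hv; linarith
      positivity
  refine step1.trans (le_of_eq step2 |>.trans ?_)
  apply ENNReal.ofReal_le_ofReal
  have hhalf : (s/2)^(2-2*H) ≤ s^(2-2*H) :=
    Real.rpow_le_rpow (by linarith) (by linarith) (by linarith)
  have hcomb : s^(4*H-4) * s^(2-2*H) = s^(2*H-2) := by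
    rw [← Real.rpow_add hs0, show 4*H-4 + (2-2*H) = 2*H-2 from by ring]
  rw [hE]
  have key2 : s^(4*H-4) * (s/2)^(2-2*H) / (2-2*H) ≤ s^(2*H-2) / (2-2*H) := by
    apply (div_le_div_iff_of_pos_right (by linarith : (0:ℝ) < 2-2*H)).mpr
    calc s^(4*H-4) * (s/2)^(2-2*H) ≤ s^(4*H-4) * s^(2-2*H) :=
          mul_le_mul_of_nonneg_left hhalf (by positivity)
      _ = s^(2*H-2) := hcomb
  calc 64*M^2*s^(4*H-4)*((s/2)^(2-2*H)/(2-2*H))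
      = 64*M^2*(s^(4*H-4) * (s/2)^(2-2*H) / (2-2*H)) := by ring
    _ ≤ 64*M^2*(s^(2*H-2)/(2-2*H)) := mul_le_mul_of_nonneg_left key2 (by positivity)
    _ = 64*M^2/(2-2*H) * s^(2*H-2) := by ring

lemma pieceC {H t s : ℝ} (h1 : 1/2 < H) (h2 : H < 1) (hT : 4*|t| + 4 < s) :
    (∫⁻ v in Ico (-s/2) t,
        ENNReal.ofReal ((z_H H (t + s) (v + s) - z_H H s (v + s) - f_H H t v) ^ 2))
      ≤ ENNReal.ofReal (4*(C_H H * (|t|+1))^2 * s ^ (2*H-2)) := by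
  have habs := abs_nonneg t
  have hs0 : 0 < s := by linarith
  set M := C_H H * (|t|+1) with hM
  have hMnn : 0 ≤ M := mul_nonneg (C_H_pos h1 h2).le (by linarith)
  have step1 : (∫⁻ v in Ico (-s/2) t,
        ENNReal.ofReal ((z_H H (t + s) (v + s) - z_H H s (v + s) - f_H H t v) ^ 2))
      ≤ ∫⁻ _ in Ico (-s/2) t, ENNReal.ofReal (4*M^2 * s ^ (2*H-3)) := by
    apply setLIntegral_mono measurable_const
    intro v hv
    obtain ⟨hv1, hv2⟩ := hv
    apply ENNReal.ofReal_le_ofReal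
    calc (z_H H (t + s) (v + s) - z_H H s (v + s) - f_H H t v) ^ 2
        ≤ (M * (2 * s ^ (H - 3/2)))^2 :=
          sq_le_of_abs_le (bound_R3 h1 h2 hT hv1 hv2)
      _ = 4*M^2 * s ^ (2*H-3) := by
          have e1 : (s ^ (H - 3/2)) ^ 2 = s ^ (2*H-3) := by
            rw [sq, ← Real.rpow_add hs0, show H-3/2 + (H-3/2) = 2*H-3 from by ring]
          rw [mul_pow, mul_pow, mul_pow, e1]
          ring
  refine step1.trans ?_
  rw [MeasureTheory.setLIntegral_const]
  rw [Real.volume_Ico]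
  rw [← ENNReal.ofReal_mul (by positivity)]
  apply ENNReal.ofReal_le_ofReal
  have hts : t - (-s/2) ≤ s := by
    have := le_abs_self t; linarith
  calc 4*M^2 * s ^ (2*H-3) * (t - (-s/2))
      ≤ 4*M^2 * s ^ (2*H-3) * s := by
        apply mul_le_mul_of_nonneg_left hts (by positivity)
    _ = 4*M^2 * s ^ (2*H-2) := by
        have e : s ^ (2*H-3) * s = s ^ (2*H-2) := by
          rw [show 2*H-2 = 2*H-3+1 from by ring, Real.rpow_add hs0, Real.rpow_one]
        rw [mul_assoc, e]



/-- L²-kernel estimate behind the convergence of the shifted Molchan–Golosov fractional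
Lévy process to the Mandelbrot–Van Ness one: for `H ∈ (1/2,1)` and `t ∈ ℝ` there are
`S > max(0,−t)` and `C > 0` such that for all `s > S`,
`∫_{−∞}^t (z_H(t+s,v+s) − z_H(s,v+s) − f_H(t,v))^2 dv ≤ C s^{2H−2}`. -/
theorem shifted_kernel_L2_estimate (H t : ℝ) (hH : H ∈ Set.Ioo (1/2 : ℝ) 1) :
    ∃ S > max 0 (-t), ∃ C > 0, ∀ s > S,
      (∫⁻ v in Set.Iio t,
          ENNReal.ofReal ((z_H H (t + s) (v + s) - z_H H s (v + s) - f_H H t v) ^ 2))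
        ≤ ENNReal.ofReal (C * s ^ (2*H - 2)) := by
  obtain ⟨h1, h2⟩ := hH
  have habs := abs_nonneg t
  have hCH := C_H_pos h1 h2
  set M := C_H H * (|t|+1) with hM
  have hMpos : 0 < M := mul_pos hCH (by linarith)
  have h2H : (0:ℝ) < 2-2*H := by linarith
  refine ⟨4*|t| + 4, max_lt (by linarith) (by linarith [neg_le_abs t]),
    4*M^2/(2-2*H) + 64*M^2/(2-2*H) + 4*M^2, by positivity, ?_⟩
  intro s hs
  have hT : 4*|t| + 4 < s := hs
  have hs0 : 0 < s := by linarith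
  have hsub : Iio t ⊆ Iic (-s) ∪ (Ioo (-s) (-s/2) ∪ Ico (-s/2) t) := by
    intro v hv
    simp only [mem_Iio] at hv
    rcases le_or_gt v (-s) with h | h
    · exact Or.inl h
    · rcases lt_or_ge v (-s/2) with h' | h'
      · exact Or.inr (Or.inl ⟨h, h'⟩)
      · exact Or.inr (Or.inr ⟨h', hv⟩)
  have hsnn : (0:ℝ) ≤ s ^ (2*H-2) := Real.rpow_nonneg hs0.le _
  calc (∫⁻ v in Set.Iio t,
        ENNReal.ofReal ((z_H H (t + s) (v + s) - z_H H s (v + s) - f_H H t v) ^ 2))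
      ≤ ∫⁻ v in Iic (-s) ∪ (Ioo (-s) (-s/2) ∪ Ico (-s/2) t),
          ENNReal.ofReal ((z_H H (t + s) (v + s) - z_H H s (v + s) - f_H H t v) ^ 2) :=
        lintegral_mono_set hsub
    _ ≤ (∫⁻ v in Iic (-s),
          ENNReal.ofReal ((z_H H (t + s) (v + s) - z_H H s (v + s) - f_H H t v) ^ 2))
        + ∫⁻ v in Ioo (-s) (-s/2) ∪ Ico (-s/2) t,
          ENNReal.ofReal ((z_H H (t + s) (v + s) - z_H H s (v + s) - f_H H t v) ^ 2) :=
        lintegral_union_le _ _ _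
    _ ≤ (∫⁻ v in Iic (-s),
          ENNReal.ofReal ((z_H H (t + s) (v + s) - z_H H s (v + s) - f_H H t v) ^ 2))
        + ((∫⁻ v in Ioo (-s) (-s/2),
            ENNReal.ofReal ((z_H H (t + s) (v + s) - z_H H s (v + s) - f_H H t v) ^ 2))
          + ∫⁻ v in Ico (-s/2) t,
            ENNReal.ofReal ((z_H H (t + s) (v + s) - z_H H s (v + s) - f_H H t v) ^ 2)) :=
        add_le_add_right (lintegral_union_le _ _ _) _
    _ ≤ ENNReal.ofReal (4*M^2/(2-2*H) * s ^ (2*H-2))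
        + (ENNReal.ofReal (64*M^2/(2-2*H) * s ^ (2*H-2))
          + ENNReal.ofReal (4*M^2 * s ^ (2*H-2))) :=
        add_le_add (pieceA h1 h2 hT) (add_le_add (pieceB h1 h2 hT) (pieceC h1 h2 hT))
    _ = ENNReal.ofReal ((4*M^2/(2-2*H) + 64*M^2/(2-2*H) + 4*M^2) * s ^ (2*H-2)) := by
        rw [← ENNReal.ofReal_add (by positivity) (by positivity),
          ← ENNReal.ofReal_add (by positivity) (by positivity)]
        congr 1
        ring
end
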